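/- arXiv:2209.00242 — 6 statements merged into one kernel-verified Lean document; each statement's English description precedes it below -/
import Mathlib

section
/- Let f : ℝ → ℝ be smooth, ε > 0, and let u : [0,∞)×ℝ → ℝ be a smooth solution of u_t + f(u)_x = ε u_xx with u(0,x) = u_0(x). Suppose α : [0,∞)×ℝ → ℝ is a smooth solution of α_t + f'(u) α_x − ε α_xx = 0 with α(0,x) = x, and suppose U : [0,∞)×ℝ → ℝ is a smooth function such that u(t,x) = U(t, α(t,x)) for all (t,x). Then for all (t,x), ∂_t U(t, α(t,x)) = ε α_x(t,x)² ∂_α² U(t, α(t,x)), and U(0, α) = u_0(α) for all α ∈ ℝ. -/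
open Function

/-- Partial derivative in the first variable of a jointly differentiable function. -/
lemma pd1 {F : ℝ → ℝ → ℝ} (hF : Differentiable ℝ (uncurry F)) (a b : ℝ) :
    HasDerivAt (fun s => F s b) (fderiv ℝ (uncurry F) (a, b) (1, 0)) a := by
  have hc : HasDerivAt (fun s : ℝ => (s, b)) ((1 : ℝ), (0 : ℝ)) a :=
    (hasDerivAt_id a).prodMk (hasDerivAt_const a b)
  exact (hF (a, b)).hasFDerivAt.comp_hasDerivAt a hc

/-- Partial derivative in the second variable of a jointly differentiable function. -/
lemma pd2 {F : ℝ → ℝ → ℝ} (hF : Differentiable ℝ (uncurry F)) (a b : ℝ) :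
    HasDerivAt (fun y => F a y) (fderiv ℝ (uncurry F) (a, b) (0, 1)) b := by
  have hc : HasDerivAt (fun y : ℝ => (a, y)) ((0 : ℝ), (1 : ℝ)) b :=
    (hasDerivAt_const b a).prodMk (hasDerivAt_id b)
  exact (hF (a, b)).hasFDerivAt.comp_hasDerivAt b hc

lemma slice2 {F : ℝ → ℝ → ℝ} (hF : ContDiff ℝ (⊤ : ℕ∞) (uncurry F)) (a : ℝ) :
    ContDiff ℝ (⊤ : ℕ∞) (F a) :=
  hF.comp (contDiff_const.prodMk contDiff_id)

/-- Change to characteristic coordinates: if `u` solves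
`u_t + f(u)_x = ε u_xx` with `u(0,·) = u₀`, `α` solves
`α_t + f'(u) α_x - ε α_xx = 0` with `α(0,x) = x`, and `U` is smooth with
`u(t,x) = U(t, α(t,x))`, then `∂_t U(t,α(t,x)) = ε α_x(t,x)² ∂_α² U(t,α(t,x))`
and `U(0,β) = u₀(β)` for all `β`. -/
theorem stmt3
    (f : ℝ → ℝ) (hf : ContDiff ℝ (⊤ : ℕ∞) f)
    (ε : ℝ) (hε : 0 < ε)
    (u : ℝ → ℝ → ℝ) (hu : ContDiff ℝ (⊤ : ℕ∞) (Function.uncurry u))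
    (u₀ : ℝ → ℝ) (hinit : ∀ x, u 0 x = u₀ x)
    (huPDE : ∀ t x,
      deriv (fun s => u s x) t + deriv f (u t x) * deriv (fun y => u t y) x
        = ε * deriv (deriv (u t)) x)
    (α : ℝ → ℝ → ℝ) (hα : ContDiff ℝ (⊤ : ℕ∞) (Function.uncurry α))
    (hαPDE : ∀ t x,
      deriv (fun s => α s x) t + deriv f (u t x) * deriv (fun y => α t y) x
        - ε * deriv (deriv (α t)) x = 0)
    (hαinit : ∀ x, α 0 x = x)
    (U : ℝ → ℝ → ℝ) (hU : ContDiff ℝ (⊤ : ℕ∞) (Function.uncurry U))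
    (hrep : ∀ t x, u t x = U t (α t x)) :
    (∀ t x,
      deriv (fun s => U s (α t x)) t
        = ε * (deriv (fun y => α t y) x) ^ 2 * deriv (deriv (U t)) (α t x)) ∧
    (∀ β : ℝ, U 0 β = u₀ β) := by
  have h1t : ((⊤ : ℕ∞) : WithTop ℕ∞) ≠ 0 := by simp
  have hUd : Differentiable ℝ (uncurry U) := hU.differentiable h1t
  have hαd : Differentiable ℝ (uncurry α) := hα.differentiable h1t
  constructor
  · intro t x
    set A := α t x with hA
    set LU := fderiv ℝ (uncurry U) (t, A) with hLU
    -- smoothness of slices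
    have hUt : ContDiff ℝ (⊤ : ℕ∞) (U t) := slice2 hU t
    have hαt : ContDiff ℝ (⊤ : ℕ∞) (α t) := slice2 hα t
    have hUt' : ContDiff ℝ (⊤ : ℕ∞) (deriv (U t)) := (contDiff_infty_iff_deriv.mp hUt).2
    have hαt' : ContDiff ℝ (⊤ : ℕ∞) (deriv (α t)) := (contDiff_infty_iff_deriv.mp hαt).2
    -- notations for the various derivatives
    set Ut := LU (1, 0) with hUt0
    set Uα := LU (0, 1) with hUα0
    set ax := deriv (α t) x with hax
    set axx := deriv (deriv (α t)) x with haxx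
    set Uαα := deriv (deriv (U t)) A with hUαα
    set at' := fderiv ℝ (uncurry α) (t, x) (1, 0) with hat'
    -- t-partial of α
    have hαtd : HasDerivAt (fun s => α s x) at' t := pd1 hαd t x
    -- x-partials
    have hαxd : HasDerivAt (α t) ax x := (hαt.differentiable h1t x).hasDerivAt
    have hUαd : HasDerivAt (U t) Uα A := by
      have := pd2 hUd t A
      exact this
    -- u's t-derivative via chain rule
    have hcurve : HasDerivAt (fun s => (s, α s x)) ((1 : ℝ), at') t :=
      (hasDerivAt_id t).prodMk hαtd
    have hutd : HasDerivAt (fun s => u s x) (LU (1, at')) t := by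
      have h := (hUd (t, A)).hasFDerivAt.comp_hasDerivAt t hcurve
      have heq : (fun s => u s x) = fun s => U s (α s x) := funext fun s => hrep s x
      rw [heq]
      exact h
    have hLUlin : LU (1, at') = Ut + at' * Uα := by
      have : ((1 : ℝ), at') = (1, 0) + at' • ((0 : ℝ), (1 : ℝ)) := by
        simp [Prod.ext_iff]
      rw [this, map_add, map_smul, smul_eq_mul, hUt0, hUα0]
    -- u's x-derivative
    have huxd : HasDerivAt (fun y => u t y) (Uα * ax) x := by
      have h := hUαd.comp x hαxd
      have heq : (fun y => u t y) = fun y => U t (α t y) := funext fun y => hrep t y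
      rw [heq]
      exact h
    -- formula for deriv (u t)
    have hderiv_ut : deriv (u t) = fun y => deriv (U t) (α t y) * deriv (α t) y := by
      funext y
      have h1 : HasDerivAt (α t) (deriv (α t) y) y := (hαt.differentiable h1t y).hasDerivAt
      have h2 : HasDerivAt (U t) (deriv (U t) (α t y)) (α t y) :=
        (hUt.differentiable h1t (α t y)).hasDerivAt
      have h := h2.comp y h1
      have heq : (fun y => u t y) = fun y => U t (α t y) := funext fun y => hrep t y
      have : HasDerivAt (u t) (deriv (U t) (α t y) * deriv (α t) y) y := by
        rw [show u t = fun y => U t (α t y) from heq]; exact h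
      exact this.deriv
    -- second x-derivative of u t
    have huxxd : HasDerivAt (deriv (u t)) (Uαα * ax * ax + deriv (U t) A * axx) x := by
      rw [hderiv_ut]
      have h1 : HasDerivAt (fun y => deriv (U t) (α t y)) (Uαα * ax) x := by
        have hh : HasDerivAt (deriv (U t)) Uαα A :=
          (hUt'.differentiable h1t A).hasDerivAt
        exact hh.comp x hαxd
      have h2 : HasDerivAt (deriv (α t)) axx x :=
        (hαt'.differentiable h1t x).hasDerivAt
      exact h1.mul h2
    -- partial derivatives appearing in the goal
    have hgoalLHS : deriv (fun s => U s (α t x)) t = Ut := by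
      rw [← hA]
      exact (pd1 hUd t A).deriv
    have hUαval : deriv (U t) A = Uα := hUαd.deriv
    -- plug into the PDEs
    have h1 := huPDE t x
    rw [hutd.deriv, huxd.deriv, huxxd.deriv, hLUlin, hUαval] at h1
    have h2 := hαPDE t x
    rw [hαtd.deriv, ← hax, ← haxx] at h2
    rw [hgoalLHS]
    linear_combination h1 - Uα * h2
  · intro β
    have h := hrep 0 β
    rw [hαinit β] at h
    rw [← h, hinit β]
end

section
/- Let ε > 0, let b : [0,∞)×𝕋ⁿ → ℝⁿ be smooth on the torus 𝕋ⁿ, let Θ : [0,∞)×𝕋ⁿ → ℝ be a smooth strictly positive solution of Θ_t + div(bΘ) = ε ΔΘ, and let v : [0,∞)×𝕋ⁿ → ℝ be a smooth solution of v_t + div(b v) = ε Δv. Then the ratio w = v/Θ satisfies the identity w_t + b·∇w = ε Θ^{−2} div(Θ² ∇w) at every point (t,x). -/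
/-- Partial derivative in the `i`-th coordinate direction. -/
noncomputable def pderiv₉ {n : ℕ} (i : Fin n) (g : (Fin n → ℝ) → ℝ) (x : Fin n → ℝ) : ℝ :=
  fderiv ℝ g x (Pi.single i 1)

/-- A function on `ℝⁿ` representing a function on the torus `𝕋ⁿ = [0,1]ⁿ`:
it is periodic with respect to the lattice `ℤⁿ`. -/
def TorusFun₉ {n : ℕ} (g : (Fin n → ℝ) → ℝ) : Prop :=
  ∀ (x : Fin n → ℝ) (k : Fin n → ℤ), g (x + fun i => (k i : ℝ)) = g x

lemma pderiv_mul₉ {n : ℕ} (i : Fin n) {p q : (Fin n → ℝ) → ℝ} {x : Fin n → ℝ}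
    (hp : DifferentiableAt ℝ p x) (hq : DifferentiableAt ℝ q x) :
    pderiv₉ i (fun y => p y * q y) x = p x * pderiv₉ i q x + q x * pderiv₉ i p x := by
  simp [pderiv₉, fderiv_fun_mul hp hq]

lemma pderiv_sub₉ {n : ℕ} (i : Fin n) {p q : (Fin n → ℝ) → ℝ} {x : Fin n → ℝ}
    (hp : DifferentiableAt ℝ p x) (hq : DifferentiableAt ℝ q x) :
    pderiv₉ i (fun y => p y - q y) x = pderiv₉ i p x - pderiv₉ i q x := by
  simp [pderiv₉, fderiv_fun_sub hp hq]

lemma contDiff_pderiv₉ {n : ℕ} (i : Fin n) {p : (Fin n → ℝ) → ℝ}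
    (hp : ContDiff ℝ (⊤ : ℕ∞) p) : ContDiff ℝ (⊤ : ℕ∞) (pderiv₉ i p) :=
  (hp.fderiv_right (by exact_mod_cast le_top)).clm_apply contDiff_const

/-- If `Θ > 0` solves `Θ_t + div(bΘ) = ε ΔΘ` and `v` solves
`v_t + div(bv) = ε Δv` on the torus, then `w = v/Θ` satisfies
`w_t + b·∇w = ε Θ⁻² div(Θ² ∇w)` at every point. -/
theorem stmt9 (n : ℕ) (hn : 0 < n)
    (ε : ℝ) (hε : 0 < ε)
    (b : ℝ → (Fin n → ℝ) → (Fin n → ℝ))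
    (hb : ContDiff ℝ (⊤ : ℕ∞) (Function.uncurry b))
    (hbper : ∀ t i, TorusFun₉ (fun x => b t x i))
    (Θ v : ℝ → (Fin n → ℝ) → ℝ)
    (hΘ : ContDiff ℝ (⊤ : ℕ∞) (Function.uncurry Θ))
    (hΘper : ∀ t, TorusFun₉ (Θ t))
    (hΘpos : ∀ t x, 0 ≤ t → 0 < Θ t x)
    (hΘPDE : ∀ t x, 0 ≤ t →
      deriv (fun s => Θ s x) t + ∑ i, pderiv₉ i (fun y => b t y i * Θ t y) x
        = ε * ∑ i, pderiv₉ i (pderiv₉ i (Θ t)) x)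
    (hv : ContDiff ℝ (⊤ : ℕ∞) (Function.uncurry v))
    (hvper : ∀ t, TorusFun₉ (v t))
    (hvPDE : ∀ t x, 0 ≤ t →
      deriv (fun s => v s x) t + ∑ i, pderiv₉ i (fun y => b t y i * v t y) x
        = ε * ∑ i, pderiv₉ i (pderiv₉ i (v t)) x) :
    ∀ t x, 0 ≤ t →
      deriv (fun s => v s x / Θ s x) t
          + ∑ i, b t x i * pderiv₉ i (fun y => v t y / Θ t y) x
        = ε * ((Θ t x) ^ 2)⁻¹ *
            ∑ i, pderiv₉ i
              (fun y => (Θ t y) ^ 2 * pderiv₉ i (fun z => v t z / Θ t z) y) x := by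
  intro t x ht
  -- basic notation
  set f : (Fin n → ℝ) → ℝ := Θ t with hfdef
  set g : (Fin n → ℝ) → ℝ := v t with hgdef
  have hf : ContDiff ℝ (⊤ : ℕ∞) f := hΘ.comp (contDiff_const.prodMk contDiff_id)
  have hg : ContDiff ℝ (⊤ : ℕ∞) g := hv.comp (contDiff_const.prodMk contDiff_id)
  have hbi : ∀ i : Fin n, ContDiff ℝ (⊤ : ℕ∞) (fun y => b t y i) := fun i =>
    (contDiff_pi.mp (hb.comp (contDiff_const.prodMk contDiff_id))) i
  have hfne : ∀ y, f y ≠ 0 := fun y => (hΘpos t y ht).ne'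
  set w : (Fin n → ℝ) → ℝ := fun y => g y / f y with hwdef
  have hw : ContDiff ℝ (⊤ : ℕ∞) w := hg.div hf hfne
  have hgf : g = fun y => w y * f y := funext fun y => (div_mul_cancel₀ _ (hfne y)).symm
  -- first spatial derivatives of `w`
  have hDg : ∀ (i : Fin n) (y : Fin n → ℝ),
      pderiv₉ i g y = w y * pderiv₉ i f y + f y * pderiv₉ i w y := by
    intro i y
    calc pderiv₉ i g y = pderiv₉ i (fun z => w z * f z) y := by rw [← hgf]
      _ = w y * pderiv₉ i f y + f y * pderiv₉ i w y :=
        pderiv_mul₉ i (hw.differentiable (by simp) y) (hf.differentiable (by simp) y)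
  have hkey : ∀ i : Fin n, (fun y => f y ^ 2 * pderiv₉ i w y)
      = fun y => f y * pderiv₉ i g y - g y * pderiv₉ i f y := by
    intro i
    funext y
    have h1 := hDg i y
    have h2 : g y = w y * f y := by rw [hgf]
    rw [h1, h2]; ring
  -- second derivative identity
  have hstepB : ∀ i : Fin n,
      pderiv₉ i (fun y => f y ^ 2 * pderiv₉ i w y) x
        = f x * pderiv₉ i (pderiv₉ i g) x - g x * pderiv₉ i (pderiv₉ i f) x := by
    intro i
    rw [hkey i]
    have d1 : DifferentiableAt ℝ f x := hf.differentiable (by simp) x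
    have d2 : DifferentiableAt ℝ g x := hg.differentiable (by simp) x
    have d3 : DifferentiableAt ℝ (pderiv₉ i g) x :=
      (contDiff_pderiv₉ i hg).differentiable (by simp) x
    have d4 : DifferentiableAt ℝ (pderiv₉ i f) x :=
      (contDiff_pderiv₉ i hf).differentiable (by simp) x
    rw [pderiv_sub₉ i (p := fun y => f y * pderiv₉ i g y) (q := fun y => g y * pderiv₉ i f y) (d1.mul d3) (d2.mul d4), pderiv_mul₉ i d1 d3, pderiv_mul₉ i d2 d4]
    ring
  -- time derivative of the quotient
  have hvt : HasDerivAt (fun s => v s x) (deriv (fun s => v s x) t) t :=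
    (((hv.comp (contDiff_id.prodMk contDiff_const)).differentiable (by simp)) t).hasDerivAt
  have hΘt : HasDerivAt (fun s => Θ s x) (deriv (fun s => Θ s x) t) t :=
    (((hΘ.comp (contDiff_id.prodMk contDiff_const)).differentiable (by simp)) t).hasDerivAt
  have hderiv_div : deriv (fun s => v s x / Θ s x) t
      = (deriv (fun s => v s x) t * f x - g x * deriv (fun s => Θ s x) t) / f x ^ 2 :=
    (hvt.div hΘt (hfne x)).deriv
  -- rewrite the PDEs
  have hVt : deriv (fun s => v s x) t
      = ∑ i, (ε * pderiv₉ i (pderiv₉ i g) x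
          - (b t x i * pderiv₉ i g x + g x * pderiv₉ i (fun y => b t y i) x)) := by
    have hpde := hvPDE t x ht
    rw [← hgdef] at hpde
    have hsum : ∀ i : Fin n, pderiv₉ i (fun y => b t y i * g y) x
        = b t x i * pderiv₉ i g x + g x * pderiv₉ i (fun y => b t y i) x := fun i =>
      pderiv_mul₉ i ((hbi i).differentiable (by simp) x) (hg.differentiable (by simp) x)
    simp only [hsum] at hpde
    rw [Finset.mul_sum] at hpde
    rw [Finset.sum_sub_distrib]
    linarith [hpde]
  have hTt : deriv (fun s => Θ s x) t
      = ∑ i, (ε * pderiv₉ i (pderiv₉ i f) x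
          - (b t x i * pderiv₉ i f x + f x * pderiv₉ i (fun y => b t y i) x)) := by
    have hpde := hΘPDE t x ht
    rw [← hfdef] at hpde
    have hsum : ∀ i : Fin n, pderiv₉ i (fun y => b t y i * f y) x
        = b t x i * pderiv₉ i f x + f x * pderiv₉ i (fun y => b t y i) x := fun i =>
      pderiv_mul₉ i ((hbi i).differentiable (by simp) x) (hf.differentiable (by simp) x)
    simp only [hsum] at hpde
    rw [Finset.mul_sum] at hpde
    rw [Finset.sum_sub_distrib]
    linarith [hpde]
  -- spatial derivative of w at x
  have hDwx : ∀ i : Fin n, pderiv₉ i w x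
      = (f x * pderiv₉ i g x - g x * pderiv₉ i f x) / f x ^ 2 := by
    intro i
    have h := congrFun (hkey i) x
    rw [eq_div_iff (pow_ne_zero 2 (hfne x))]
    linear_combination h
  -- assemble everything
  have hF2 : f x ^ 2 ≠ 0 := pow_ne_zero 2 (hfne x)
  have main :
      (∑ i, (ε * pderiv₉ i (pderiv₉ i g) x
          - (b t x i * pderiv₉ i g x + g x * pderiv₉ i (fun y => b t y i) x))) * f x
        - g x * ∑ i, (ε * pderiv₉ i (pderiv₉ i f) x
          - (b t x i * pderiv₉ i f x + f x * pderiv₉ i (fun y => b t y i) x))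
        + ∑ i, b t x i * (f x * pderiv₉ i g x - g x * pderiv₉ i f x)
      = ε * ∑ i, (f x * pderiv₉ i (pderiv₉ i g) x - g x * pderiv₉ i (pderiv₉ i f) x) := by
    rw [Finset.sum_mul, Finset.mul_sum, Finset.mul_sum, ← Finset.sum_sub_distrib,
      ← Finset.sum_add_distrib]
    exact Finset.sum_congr rfl fun i _ => by ring
  rw [hderiv_div]
  simp only [hstepB, hDwx, hVt, hTt]
  simp only [← mul_div_assoc]
  rw [← Finset.sum_div, ← add_div, main]
  field_simp
end

section
/- Let ε > 0, let b : [0,∞)×𝕋ⁿ → ℝⁿ be smooth on the torus 𝕋ⁿ, let Θ be a smooth strictly positive solution of Θ_t + div(bΘ) = ε ΔΘ with Θ(0,x) = 1, and let v be a smooth solution of v_t + div(bv) = ε Δv with bounded initial data v(0,·) = v_0. Then |v(t,x)| ≤ Θ(t,x) · sup_{y∈𝕋ⁿ} |v_0(y)| for all (t,x). -/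
open Set Filter Topology Function

/-- Partial derivative in the `i`-th coordinate direction. -/
noncomputable def pderiv₁₀ {n : ℕ} (i : Fin n) (g : (Fin n → ℝ) → ℝ) (x : Fin n → ℝ) : ℝ :=
  fderiv ℝ g x (Pi.single i 1)

/-- A function on `ℝⁿ` representing a function on the torus `𝕋ⁿ = [0,1]ⁿ`:
it is periodic with respect to the lattice `ℤⁿ`. -/
def TorusFun₁₀ {n : ℕ} (g : (Fin n → ℝ) → ℝ) : Prop :=
  ∀ (x : Fin n → ℝ) (k : Fin n → ℤ), g (x + fun i => (k i : ℝ)) = g x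

section Helpers
variable {n : ℕ}

/-- slice smoothness -/
lemma slice_contDiff {f : ℝ → (Fin n → ℝ) → ℝ} (hf : ContDiff ℝ (⊤:ℕ∞) (Function.uncurry f))
    (t : ℝ) : ContDiff ℝ (⊤:ℕ∞) (f t) :=
  hf.comp (contDiff_const.prodMk contDiff_id)

lemma time_diff {f : ℝ → (Fin n → ℝ) → ℝ} (hf : ContDiff ℝ (⊤:ℕ∞) (Function.uncurry f))
    (x : Fin n → ℝ) : Differentiable ℝ (fun s => f s x) :=
  (hf.differentiable (by simp)).comp (differentiable_id.prodMk (differentiable_const x))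

lemma pderiv_comb {f g : (Fin n → ℝ) → ℝ} (hf : Differentiable ℝ f) (hg : Differentiable ℝ g)
    (α β : ℝ) (i : Fin n) (x : Fin n → ℝ) :
    pderiv₁₀ i (fun y => α * f y + β * g y) x = α * pderiv₁₀ i f x + β * pderiv₁₀ i g x := by
  unfold pderiv₁₀
  rw [fderiv_fun_add ((hf x).const_mul α) ((hg x).const_mul β), fderiv_const_mul (hf x),
    fderiv_const_mul (hg x)]
  simp

lemma pderiv_mul {f g : (Fin n → ℝ) → ℝ} (hf : Differentiable ℝ f) (hg : Differentiable ℝ g)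
    (i : Fin n) (x : Fin n → ℝ) :
    pderiv₁₀ i (fun y => f y * g y) x = pderiv₁₀ i f x * g x + f x * pderiv₁₀ i g x := by
  unfold pderiv₁₀
  rw [fderiv_fun_mul (hf x) (hg x)]
  simp [mul_comm, add_comm]

/-- one-sided: if `h` has a max at `a` over `[0,a]`, `0 < a`, then `deriv h a ≥ 0`. -/
lemma deriv_nonneg_of_left_max {h : ℝ → ℝ} {a : ℝ} (ha : 0 < a)
    (hd : DifferentiableAt ℝ h a) (hm : ∀ s ∈ Set.Icc (0:ℝ) a, h s ≤ h a) :
    0 ≤ deriv h a := by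
  have H := hasDerivAt_iff_tendsto_slope.1 hd.hasDerivAt
  have H' : Filter.Tendsto (slope h a) (𝓝[<] a) (𝓝 (deriv h a)) :=
    H.mono_left (nhdsWithin_mono a fun x hx => ne_of_lt hx)
  refine ge_of_tendsto H' ?_
  filter_upwards [Ioo_mem_nhdsLT_of_mem (by exact ⟨ha, le_refl a⟩ : a ∈ Set.Ioc 0 a)] with s hs
  have h1 : h s ≤ h a := hm s ⟨hs.1.le, hs.2.le⟩
  have h2 : s - a < 0 := sub_neg.2 hs.2
  rw [slope_def_field]
  rw [div_nonneg_iff]; right; exact ⟨by linarith, h2.le⟩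

/-- second derivative test at a global max. -/
lemma deriv2_nonpos_of_max {g : ℝ → ℝ} (hg : ContDiff ℝ (⊤:ℕ∞) g)
    (h0 : ∀ r, g r ≤ g 0) : deriv (deriv g) 0 ≤ 0 := by
  by_contra hpos
  push_neg at hpos
  have hdg : Differentiable ℝ g := hg.differentiable (by simp)
  have hdg2 : Differentiable ℝ (deriv g) :=
    (hg.iterate_deriv 1).differentiable (by simp)
  have hg0 : deriv g 0 = 0 := by
    have : IsLocalMax g 0 := (isMaxOn_iff.2 fun x _ => h0 x).isLocalMax Filter.univ_mem
    exact this.deriv_eq_zero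
  -- slope of deriv g tends to deriv (deriv g) 0 > 0, so deriv g > 0 on (0, δ)
  have H := hasDerivAt_iff_tendsto_slope.1 (hdg2 0).hasDerivAt
  have H' : Filter.Tendsto (slope (deriv g) 0) (𝓝[>] 0) (𝓝 (deriv (deriv g) 0)) :=
    H.mono_left (nhdsWithin_mono 0 fun x hx => ne_of_gt hx)
  have hev : ∀ᶠ s in 𝓝[>] (0:ℝ), 0 < slope (deriv g) 0 s :=
    H'.eventually (eventually_gt_nhds hpos)
  obtain ⟨δ, hδ, hsub⟩ := mem_nhdsGT_iff_exists_Ioo_subset.1 hev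
  -- on Ioo 0 δ : deriv g > 0
  have hpos' : ∀ s ∈ Set.Ioo (0:ℝ) δ, 0 < deriv g s := by
    intro s hs
    have := hsub hs
    simp only [Set.mem_setOf_eq, slope_def_field, hg0, sub_zero] at this
    have := mul_pos this hs.1
    rwa [div_mul_cancel₀] at this
    exact ne_of_gt hs.1
  have hmono : StrictMonoOn g (Set.Icc 0 δ) := by
    apply strictMonoOn_of_deriv_pos (convex_Icc 0 δ) (hdg.continuous.continuousOn)
    intro s hs
    rw [interior_Icc] at hs
    exact hpos' s hs
  have hδ0 : (0:ℝ) < δ := hδ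
  have : g 0 < g (δ/2) := hmono ⟨le_refl 0, hδ0.le⟩ ⟨by linarith, by linarith⟩ (by linarith)
  exact absurd (h0 (δ/2)) (not_le.2 this)

lemma hasDerivAt_line (y : Fin n → ℝ) (i : Fin n) (r : ℝ) :
    HasDerivAt (fun r : ℝ => y + r • (Pi.single i 1 : Fin n → ℝ)) (Pi.single i 1) r := by
  have h : HasDerivAt (fun r : ℝ => r • (Pi.single i 1 : Fin n → ℝ))
      ((1:ℝ) • (Pi.single i 1 : Fin n → ℝ)) r := (hasDerivAt_id r).smul_const _
  simpa using h.const_add y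

lemma deriv_line {f : (Fin n → ℝ) → ℝ} (hf : Differentiable ℝ f) (y : Fin n → ℝ) (i : Fin n)
    (r : ℝ) :
    deriv (fun r : ℝ => f (y + r • (Pi.single i 1 : Fin n → ℝ))) r
      = pderiv₁₀ i f (y + r • (Pi.single i 1 : Fin n → ℝ)) := by
  have := ((hf _).hasFDerivAt.comp_hasDerivAt r (hasDerivAt_line y i r))
  exact this.deriv

lemma contDiff_line {f : (Fin n → ℝ) → ℝ} (hf : ContDiff ℝ (⊤:ℕ∞) f) (y : Fin n → ℝ)
    (i : Fin n) : ContDiff ℝ (⊤:ℕ∞) (fun r : ℝ => f (y + r • (Pi.single i 1 : Fin n → ℝ))) :=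
  hf.comp (contDiff_const.add (contDiff_id.smul contDiff_const))

lemma contDiff_pderiv {f : (Fin n → ℝ) → ℝ} (hf : ContDiff ℝ (⊤:ℕ∞) f) (i : Fin n) :
    ContDiff ℝ (⊤:ℕ∞) (pderiv₁₀ i f) :=
  (hf.fderiv_right (le_refl _)).clm_apply contDiff_const

lemma deriv2_line {f : (Fin n → ℝ) → ℝ} (hf : ContDiff ℝ (⊤:ℕ∞) f) (y : Fin n → ℝ)
    (i : Fin n) :
    deriv (deriv (fun r : ℝ => f (y + r • (Pi.single i 1 : Fin n → ℝ)))) 0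
      = pderiv₁₀ i (pderiv₁₀ i f) y := by
  have hdf : Differentiable ℝ f := hf.differentiable (by simp)
  have h1 : deriv (fun r : ℝ => f (y + r • (Pi.single i 1 : Fin n → ℝ)))
      = fun r => pderiv₁₀ i f (y + r • (Pi.single i 1 : Fin n → ℝ)) :=
    funext fun r => deriv_line hdf y i r
  rw [h1, deriv_line ((contDiff_pderiv hf i).differentiable (by simp)) y i 0]
  simp

lemma pderiv_slice {F : ℝ → (Fin n → ℝ) → ℝ} (hF : ContDiff ℝ (⊤:ℕ∞) (uncurry F))
    (s : ℝ) (y : Fin n → ℝ) (i : Fin n) :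
    pderiv₁₀ i (F s) y = fderiv ℝ (uncurry F) (s, y) (0, (Pi.single i 1 : Fin n → ℝ)) := by
  have hinner : HasFDerivAt (fun z : Fin n → ℝ => ((s, z) : ℝ × (Fin n → ℝ)))
      ((0 : (Fin n → ℝ) →L[ℝ] ℝ).prod (ContinuousLinearMap.id ℝ (Fin n → ℝ))) y :=
    (hasFDerivAt_const s y).prodMk (hasFDerivAt_id y)
  have hcomp := ((hF.differentiable (by simp)) (s, y)).hasFDerivAt.comp y hinner
  have : pderiv₁₀ i (F s) y = (fderiv ℝ (uncurry F) (s, y)).comp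
      ((0 : (Fin n → ℝ) →L[ℝ] ℝ).prod (ContinuousLinearMap.id ℝ (Fin n → ℝ)))
      (Pi.single i 1 : Fin n → ℝ) := by
    unfold pderiv₁₀
    congr 1
    exact hcomp.fderiv
  simpa using this

lemma exists_shift (y : Fin n → ℝ) :
    ∃ k : Fin n → ℤ, (y + fun i => (k i : ℝ)) ∈ Set.Icc (0 : Fin n → ℝ) 1 := by
  refine ⟨fun i => -⌊y i⌋, ?_, ?_⟩ <;> intro i <;>
    simp only [Pi.add_apply, Pi.zero_apply, Pi.one_apply, Int.cast_neg]
  · have := Int.fract_nonneg (y i); rwa [Int.fract] at this; 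
  · have := (Int.fract_lt_one (y i)).le
    rwa [Int.fract] at this

lemma maxprin (ε : ℝ) (hε : 0 < ε)
    (b : ℝ → (Fin n → ℝ) → (Fin n → ℝ)) (hb : ContDiff ℝ (⊤:ℕ∞) (uncurry b))
    (w : ℝ → (Fin n → ℝ) → ℝ) (hw : ContDiff ℝ (⊤:ℕ∞) (uncurry w))
    (hwper : ∀ t, TorusFun₁₀ (w t))
    (hwPDE : ∀ t x, 0 ≤ t →
      deriv (fun s => w s x) t + ∑ i, pderiv₁₀ i (fun y => b t y i * w t y) x
        = ε * ∑ i, pderiv₁₀ i (pderiv₁₀ i (w t)) x)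
    (hw0 : ∀ x, w 0 x ≤ 0) :
    ∀ t x, 0 ≤ t → w t x ≤ 0 := by
  intro T x₀ hT
  by_contra hcon
  push_neg at hcon
  -- component functions of b are smooth
  have hBi : ∀ i : Fin n, ContDiff ℝ (⊤:ℕ∞) (fun p : ℝ × (Fin n → ℝ) => b p.1 p.2 i) :=
    fun i => (ContinuousLinearMap.proj (R := ℝ) (φ := fun _ : Fin n => ℝ) i).contDiff.comp hb
  -- total divergence as a continuous function of (s,y)
  set D : ℝ × (Fin n → ℝ) → ℝ := fun p =>
    ∑ i, fderiv ℝ (fun q : ℝ × (Fin n → ℝ) => b q.1 q.2 i) p (0, (Pi.single i 1 : Fin n → ℝ))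
    with hD
  have hDcont : Continuous D := by
    apply continuous_finset_sum
    intro i _
    have h1 : ContDiff ℝ (⊤:ℕ∞) (fderiv ℝ (fun q : ℝ × (Fin n → ℝ) => b q.1 q.2 i)) :=
      (hBi i).fderiv_right (le_refl _)
    exact (h1.clm_apply contDiff_const).continuous
  have hDeq : ∀ s y, (∑ i, pderiv₁₀ i (fun z => b s z i) y) = D (s, y) := by
    intro s y
    refine Finset.sum_congr rfl fun i _ => ?_
    exact pderiv_slice (F := fun s z => b s z i) (hBi i) s y i
  -- bound the divergence on the compact set
  have hKc : IsCompact (Set.Icc (0:ℝ) T ×ˢ Set.Icc (0:Fin n → ℝ) 1) :=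
    isCompact_Icc.prod isCompact_Icc
  obtain ⟨Λ, hΛ⟩ := hKc.exists_bound_of_continuousOn hDcont.continuousOn
  have hΛ0 : 0 ≤ Λ := le_trans (norm_nonneg _)
    (hΛ (0, 0) ⟨⟨le_refl 0, hT⟩, ⟨le_refl _, fun i => zero_le_one⟩⟩)
  set lam : ℝ := Λ + 1 with hlam
  -- the rescaled function
  set Ψ : ℝ × (Fin n → ℝ) → ℝ := fun p => Real.exp (-lam * p.1) * w p.1 p.2 with hΨ
  have hΨcont : Continuous Ψ :=
    ((Real.continuous_exp.comp (continuous_const.mul continuous_fst))).mul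
      (hw.continuous)
  obtain ⟨p₀, hp₀, hpmax⟩ := hKc.exists_isMaxOn
    ⟨(0, 0), ⟨⟨le_refl 0, hT⟩, ⟨le_refl _, fun i => zero_le_one⟩⟩⟩ hΨcont.continuousOn
  obtain ⟨s₀, y₀⟩ := p₀
  set m : ℝ := Ψ (s₀, y₀) with hm
  -- global bound over all of space
  have key : ∀ s ∈ Set.Icc (0:ℝ) T, ∀ y, Ψ (s, y) ≤ m := by
    intro s hs y
    obtain ⟨k, hk⟩ := exists_shift y
    have hper : w s (y + fun i => (k i : ℝ)) = w s y := hwper s y k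
    have : Ψ (s, y + fun i => (k i : ℝ)) = Ψ (s, y) := by simp [hΨ, hper]
    rw [← this]
    exact hpmax ⟨hs, hk⟩
  have hm0 : 0 < m :=
    lt_of_lt_of_le (by positivity) (key T ⟨hT, le_refl T⟩ x₀)
  have hs₀T : s₀ ∈ Set.Icc (0:ℝ) T := hp₀.1
  have hy₀ : y₀ ∈ Set.Icc (0:Fin n → ℝ) 1 := hp₀.2
  have hs₀pos : 0 < s₀ := by
    rcases lt_or_eq_of_le hs₀T.1 with h | h
    · exact h
    · exfalso
      have : m ≤ 0 := by
        have h2 : m = w 0 y₀ := by rw [hm, hΨ]; simp [← h]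
        rw [h2]; exact hw0 y₀
      linarith
  have hexp : (0:ℝ) < Real.exp (-lam * s₀) := Real.exp_pos _
  have hw₀pos : 0 < w s₀ y₀ := by
    by_contra hle
    push_neg at hle
    have : m ≤ 0 := mul_nonpos_of_nonneg_of_nonpos hexp.le hle
    linarith
  -- spatial max of w s₀
  have hymax : ∀ y, w s₀ y ≤ w s₀ y₀ := by
    intro y
    have := key s₀ hs₀T y
    rw [hm, hΨ] at this
    exact le_of_mul_le_mul_left this hexp
  have hwsd : ContDiff ℝ (⊤:ℕ∞) (w s₀) := slice_contDiff hw s₀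
  have hwsdiff : Differentiable ℝ (w s₀) := hwsd.differentiable (by simp)
  -- (A) gradient vanishes
  have hgrad : ∀ i, pderiv₁₀ i (w s₀) y₀ = 0 := by
    intro i
    have hloc : IsLocalMax (w s₀) y₀ :=
      (isMaxOn_iff.2 fun y _ => hymax y).isLocalMax Filter.univ_mem
    unfold pderiv₁₀
    rw [hloc.fderiv_eq_zero]
    rfl
  -- (B) second derivatives nonpositive
  have hsec : ∀ i, pderiv₁₀ i (pderiv₁₀ i (w s₀)) y₀ ≤ 0 := by
    intro i
    have hgc := contDiff_line hwsd y₀ i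
    have h0 : ∀ r : ℝ, w s₀ (y₀ + r • (Pi.single i 1 : Fin n → ℝ))
        ≤ w s₀ (y₀ + (0:ℝ) • (Pi.single i 1 : Fin n → ℝ)) := by
      intro r; simpa using hymax _
    have := deriv2_nonpos_of_max hgc h0
    rwa [deriv2_line hwsd y₀ i] at this
  -- (C) time derivative bound
  have htime : lam * w s₀ y₀ ≤ deriv (fun s => w s y₀) s₀ := by
    have hfd : HasDerivAt (fun s : ℝ => Real.exp (-lam * s))
        (Real.exp (-lam * s₀) * -lam) s₀ := by
      simpa [mul_comm] using ((hasDerivAt_id s₀).const_mul (-lam)).exp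
    have hgd : HasDerivAt (fun s => w s y₀) (deriv (fun s => w s y₀) s₀) s₀ :=
      (time_diff hw y₀ s₀).hasDerivAt
    have hprod := hfd.mul hgd
    have hmono : ∀ s ∈ Set.Icc (0:ℝ) s₀,
        (fun s => Real.exp (-lam * s) * w s y₀) s
          ≤ (fun s => Real.exp (-lam * s) * w s y₀) s₀ := by
      intro s hs
      exact key s ⟨hs.1, le_trans hs.2 hs₀T.2⟩ y₀
    have hnn := deriv_nonneg_of_left_max hs₀pos hprod.differentiableAt hmono
    rw [hprod.deriv] at hnn
    have h3 : 0 ≤ Real.exp (-lam * s₀) * (deriv (fun s => w s y₀) s₀ - lam * w s₀ y₀) := by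
      nlinarith [hnn]
    have h4 := (mul_nonneg_iff_of_pos_left hexp).1 h3
    linarith
  -- assemble via the PDE at (s₀, y₀)
  have hPDE := hwPDE s₀ y₀ hs₀pos.le
  have hmid : (∑ i, pderiv₁₀ i (fun y => b s₀ y i * w s₀ y) y₀) = D (s₀, y₀) * w s₀ y₀ := by
    rw [← hDeq s₀ y₀, Finset.sum_mul]
    refine Finset.sum_congr rfl fun i _ => ?_
    have hbd : Differentiable ℝ (fun z => b s₀ z i) :=
      (slice_contDiff (f := fun s z => b s z i) (hBi i)
        s₀).differentiable (by simp)
    rw [pderiv_mul hbd hwsdiff i y₀, hgrad i]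
    ring
  have hrhs : ε * ∑ i, pderiv₁₀ i (pderiv₁₀ i (w s₀)) y₀ ≤ 0 :=
    mul_nonpos_of_nonneg_of_nonpos hε.le (Finset.sum_nonpos fun i _ => hsec i)
  have hDbound : |D (s₀, y₀)| ≤ Λ := hΛ (s₀, y₀) ⟨hs₀T, hy₀⟩
  have habs := abs_le.1 hDbound
  nlinarith [htime, hw₀pos, hPDE, hmid, hrhs, habs.1, habs.2]

/-- linear combinations of solutions solve the PDE -/
lemma pde_comb (ε : ℝ) (b : ℝ → (Fin n → ℝ) → (Fin n → ℝ))
    (hb : ContDiff ℝ (⊤:ℕ∞) (uncurry b))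
    (v Θ : ℝ → (Fin n → ℝ) → ℝ)
    (hv : ContDiff ℝ (⊤:ℕ∞) (uncurry v)) (hΘ : ContDiff ℝ (⊤:ℕ∞) (uncurry Θ))
    (hvPDE : ∀ t x, 0 ≤ t →
      deriv (fun s => v s x) t + ∑ i, pderiv₁₀ i (fun y => b t y i * v t y) x
        = ε * ∑ i, pderiv₁₀ i (pderiv₁₀ i (v t)) x)
    (hΘPDE : ∀ t x, 0 ≤ t →
      deriv (fun s => Θ s x) t + ∑ i, pderiv₁₀ i (fun y => b t y i * Θ t y) x
        = ε * ∑ i, pderiv₁₀ i (pderiv₁₀ i (Θ t)) x)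
    (α β : ℝ) :
    ∀ t x, 0 ≤ t →
      deriv (fun s => α * v s x + β * Θ s x) t
        + ∑ i, pderiv₁₀ i (fun y => b t y i * (α * v t y + β * Θ t y)) x
        = ε * ∑ i, pderiv₁₀ i (pderiv₁₀ i (fun y => α * v t y + β * Θ t y)) x := by
  intro t x ht
  have hbd : ∀ i : Fin n, Differentiable ℝ (fun z => b t z i) := by
    intro i
    have : ContDiff ℝ (⊤:ℕ∞) (fun p : ℝ × (Fin n → ℝ) => b p.1 p.2 i) :=
      (ContinuousLinearMap.proj (R := ℝ) (φ := fun _ : Fin n => ℝ) i).contDiff.comp hb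
    exact (slice_contDiff (f := fun s z => b s z i) this t).differentiable
      (by simp)
  have hvt : ContDiff ℝ (⊤:ℕ∞) (v t) := slice_contDiff hv t
  have hΘt : ContDiff ℝ (⊤:ℕ∞) (Θ t) := slice_contDiff hΘ t
  have hvtd : Differentiable ℝ (v t) := hvt.differentiable (by simp)
  have hΘtd : Differentiable ℝ (Θ t) := hΘt.differentiable (by simp)
  -- time derivative
  have h1 : deriv (fun s => α * v s x + β * Θ s x) t
      = α * deriv (fun s => v s x) t + β * deriv (fun s => Θ s x) t := by
    rw [deriv_fun_add (((time_diff hv x) t).const_mul α) (((time_diff hΘ x) t).const_mul β),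
      deriv_const_mul α ((time_diff hv x) t), deriv_const_mul β ((time_diff hΘ x) t)]
  -- transport term
  have h2 : ∀ i : Fin n, pderiv₁₀ i (fun y => b t y i * (α * v t y + β * Θ t y)) x
      = α * pderiv₁₀ i (fun y => b t y i * v t y) x
        + β * pderiv₁₀ i (fun y => b t y i * Θ t y) x := by
    intro i
    have he : (fun y => b t y i * (α * v t y + β * Θ t y))
        = fun y => α * (b t y i * v t y) + β * (b t y i * Θ t y) := by
      funext y; ring
    rw [he, pderiv_comb (f := fun y => b t y i * v t y) (g := fun y => b t y i * Θ t y) ((hbd i).mul hvtd) ((hbd i).mul hΘtd) α β i x]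
  -- diffusion term
  have h3 : ∀ i : Fin n, pderiv₁₀ i (pderiv₁₀ i (fun y => α * v t y + β * Θ t y)) x
      = α * pderiv₁₀ i (pderiv₁₀ i (v t)) x + β * pderiv₁₀ i (pderiv₁₀ i (Θ t)) x := by
    intro i
    have he : pderiv₁₀ i (fun y => α * v t y + β * Θ t y)
        = fun z => α * pderiv₁₀ i (v t) z + β * pderiv₁₀ i (Θ t) z := by
      funext z
      exact pderiv_comb hvtd hΘtd α β i z
    rw [he, pderiv_comb ((contDiff_pderiv hvt i).differentiable (by simp))
      ((contDiff_pderiv hΘt i).differentiable (by simp)) α β i x]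
  simp only [h1, Finset.sum_congr rfl fun i _ => h2 i, Finset.sum_congr rfl fun i _ => h3 i]
  rw [Finset.sum_add_distrib, ← Finset.mul_sum, ← Finset.mul_sum,
    Finset.sum_add_distrib, ← Finset.mul_sum, ← Finset.mul_sum]
  have Hv := hvPDE t x ht
  have HΘ := hΘPDE t x ht
  linear_combination α * Hv + β * HΘ

end Helpers

/-- Weighted maximum principle on the torus: if `Θ > 0` solves
`Θ_t + div(bΘ) = ε ΔΘ` with `Θ(0,·) ≡ 1` and `v` solves `v_t + div(bv) = ε Δv`
with bounded initial data `v₀`, then `|v(t,x)| ≤ Θ(t,x) ⨯ sup_y |v₀ y|`. -/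
theorem stmt10 (n : ℕ) (hn : 0 < n)
    (ε : ℝ) (hε : 0 < ε)
    (b : ℝ → (Fin n → ℝ) → (Fin n → ℝ))
    (hb : ContDiff ℝ (⊤ : ℕ∞) (Function.uncurry b))
    (hbper : ∀ t i, TorusFun₁₀ (fun x => b t x i))
    (Θ v : ℝ → (Fin n → ℝ) → ℝ)
    (hΘ : ContDiff ℝ (⊤ : ℕ∞) (Function.uncurry Θ))
    (hΘper : ∀ t, TorusFun₁₀ (Θ t))
    (hΘpos : ∀ t x, 0 ≤ t → 0 < Θ t x)
    (hΘinit : ∀ x, Θ 0 x = 1)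
    (hΘPDE : ∀ t x, 0 ≤ t →
      deriv (fun s => Θ s x) t + ∑ i, pderiv₁₀ i (fun y => b t y i * Θ t y) x
        = ε * ∑ i, pderiv₁₀ i (pderiv₁₀ i (Θ t)) x)
    (hv : ContDiff ℝ (⊤ : ℕ∞) (Function.uncurry v))
    (hvper : ∀ t, TorusFun₁₀ (v t))
    (hvPDE : ∀ t x, 0 ≤ t →
      deriv (fun s => v s x) t + ∑ i, pderiv₁₀ i (fun y => b t y i * v t y) x
        = ε * ∑ i, pderiv₁₀ i (pderiv₁₀ i (v t)) x)
    (v₀ : (Fin n → ℝ) → ℝ) (hv₀ : ∀ x, v 0 x = v₀ x)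
    (hv₀bdd : ∃ M, ∀ x, |v₀ x| ≤ M) :
    ∀ t x, 0 ≤ t → |v t x| ≤ Θ t x * ⨆ y, |v₀ y| := by
  intro t x ht
  obtain ⟨M, hM⟩ := hv₀bdd
  have hbdd : BddAbove (Set.range fun y => |v₀ y|) := ⟨M, by rintro _ ⟨y, rfl⟩; exact hM y⟩
  set C : ℝ := ⨆ y, |v₀ y| with hCdef
  have hC : ∀ y, |v₀ y| ≤ C := fun y => le_ciSup hbdd y
  have main : ∀ σ : ℝ, σ = 1 ∨ σ = -1 → ∀ t x, 0 ≤ t →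
      σ * v t x + (-C) * Θ t x ≤ 0 := by
    intro σ hσ
    apply maxprin ε hε b hb (fun s y => σ * v s y + (-C) * Θ s y)
    · exact (contDiff_const.mul hv).add (contDiff_const.mul hΘ)
    · intro s y k
      simp only
      rw [hvper s y k, hΘper s y k]
    · exact pde_comb ε b hb v Θ hv hΘ hvPDE hΘPDE σ (-C)
    · intro y
      have h1 := hC y
      have h2 := abs_le.1 h1
      rw [hv₀ y, hΘinit y]
      rcases hσ with h | h <;> rw [h] <;> nlinarith [h2.1, h2.2]
  have hpos := main 1 (Or.inl rfl) t x ht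
  have hneg := main (-1) (Or.inr rfl) t x ht
  rw [mul_comm (Θ t x) C] at *
  refine abs_le.2 ⟨by nlinarith, by nlinarith⟩
end

section
/- Let ε > 0, 1 < p < ∞, let b : [0,∞)×𝕋ⁿ → ℝⁿ be smooth on the torus 𝕋ⁿ, let Θ be a smooth strictly positive solution of Θ_t + div(bΘ) = ε ΔΘ, and let v be a smooth solution of v_t + div(bv) = ε Δv. Then at every point (t,x) where v(t,x) ≠ 0, the following identity holds: ∂_t(|v|^p/Θ^{p−1}) + div(b |v|^p/Θ^{p−1}) + ε (4(p−1)/p) Θ |∇(|v|^{p/2}/Θ^{p/2})|² = ε Δ(|v|^p/Θ^{p−1}). -/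
open Real Filter Topology

/-- Partial derivative in the `i`-th coordinate direction. -/
noncomputable def pderiv₁₁ {n : ℕ} (i : Fin n) (g : (Fin n → ℝ) → ℝ) (x : Fin n → ℝ) : ℝ :=
  fderiv ℝ g x (Pi.single i 1)

/-- A function on `ℝⁿ` representing a function on the torus `𝕋ⁿ = [0,1]ⁿ`:
it is periodic with respect to the lattice `ℤⁿ`. -/
def TorusFun₁₁ {n : ℕ} (g : (Fin n → ℝ) → ℝ) : Prop :=
  ∀ (x : Fin n → ℝ) (k : Fin n → ℤ), g (x + fun i => (k i : ℝ)) = g x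

lemma pderiv_def' {n : ℕ} (i : Fin n) (g : (Fin n → ℝ) → ℝ) (x : Fin n → ℝ) :
    pderiv₁₁ i g x = fderiv ℝ g x (Pi.single i 1) := rfl

lemma pd_congr' {n : ℕ} (i : Fin n) {f g : (Fin n → ℝ) → ℝ} {x : Fin n → ℝ}
    (h : f =ᶠ[𝓝 x] g) : pderiv₁₁ i f x = pderiv₁₁ i g x := by
  unfold pderiv₁₁; rw [h.fderiv_eq]

lemma hfd_rpow_mul {n : ℕ} {u w : (Fin n → ℝ) → ℝ} {u' w' : (Fin n → ℝ) →L[ℝ] ℝ} {x : Fin n → ℝ}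
    (hu : HasFDerivAt u u' x) (hw : HasFDerivAt w w' x)
    (hux : u x ≠ 0) (hwx : w x ≠ 0) (q r : ℝ) :
    HasFDerivAt (fun y => u y ^ q * w y ^ r)
      ((q * u x ^ (q - 1) * w x ^ r) • u' + (r * w x ^ (r - 1) * u x ^ q) • w') x := by
  have h : HasFDerivAt (fun y => u y ^ q * w y ^ r) _ x :=
    (hu.rpow_const (p := q) (Or.inl hux)).mul (hw.rpow_const (p := r) (Or.inl hwx))
  refine h.congr_fderiv ?_
  ext y
  simp [smul_smul]
  ring

lemma pd_rpow_mul {n : ℕ} (i : Fin n) {u w : (Fin n → ℝ) → ℝ} {u' w' : (Fin n → ℝ) →L[ℝ] ℝ} {x : Fin n → ℝ}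
    (hu : HasFDerivAt u u' x) (hw : HasFDerivAt w w' x)
    (hux : u x ≠ 0) (hwx : w x ≠ 0) (q r : ℝ) :
    pderiv₁₁ i (fun y => u y ^ q * w y ^ r) x
      = q * u x ^ (q - 1) * w x ^ r * u' (Pi.single i 1)
        + r * w x ^ (r - 1) * u x ^ q * w' (Pi.single i 1) := by
  rw [pderiv_def', (hfd_rpow_mul hu hw hux hwx q r).fderiv]
  simp

lemma hfd_rpow_mul3 {n : ℕ} {u w h : (Fin n → ℝ) → ℝ} {u' w' h' : (Fin n → ℝ) →L[ℝ] ℝ} {x : Fin n → ℝ}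
    (hu : HasFDerivAt u u' x) (hw : HasFDerivAt w w' x) (hh : HasFDerivAt h h' x)
    (hux : u x ≠ 0) (hwx : w x ≠ 0) (q r : ℝ) :
    HasFDerivAt (fun y => u y ^ q * w y ^ r * h y)
      ((q * u x ^ (q - 1) * w x ^ r * h x) • u' + (r * w x ^ (r - 1) * u x ^ q * h x) • w'
        + (u x ^ q * w x ^ r) • h') x := by
  have H : HasFDerivAt (fun y => u y ^ q * w y ^ r * h y) _ x :=
    (hfd_rpow_mul hu hw hux hwx q r).mul hh
  refine H.congr_fderiv ?_
  ext y
  simp [smul_smul]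
  ring

lemma hd_rpow_mul {u w : ℝ → ℝ} {ut wt t : ℝ}
    (hu : HasDerivAt u ut t) (hw : HasDerivAt w wt t)
    (hut : u t ≠ 0) (hwt : w t ≠ 0) (q r : ℝ) :
    HasDerivAt (fun s => u s ^ q * w s ^ r)
      (q * u t ^ (q - 1) * w t ^ r * ut + r * w t ^ (r - 1) * u t ^ q * wt) t := by
  have h : HasDerivAt (fun s => u s ^ q * w s ^ r) _ t :=
    (hu.rpow_const (p := q) (Or.inl hut)).mul (hw.rpow_const (p := r) (Or.inl hwt))
  convert h using 1
  ring

lemma pd_mul' {n : ℕ} (i : Fin n) {f g : (Fin n → ℝ) → ℝ} {x : Fin n → ℝ}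
    (hf : DifferentiableAt ℝ f x) (hg : DifferentiableAt ℝ g x) :
    pderiv₁₁ i (fun y => f y * g y) x = f x * pderiv₁₁ i g x + g x * pderiv₁₁ i f x := by
  rw [pderiv_def', HasFDerivAt.fderiv (f := fun y => f y * g y) (hf.hasFDerivAt.mul hg.hasFDerivAt)]
  simp [pderiv_def']

lemma abs_eq_mul' (c z : ℝ) (hc : c = 1 ∨ c = -1) (h : 0 < c * z) : |z| = c * z := by
  rcases hc with rfl | rfl
  · rw [one_mul] at h ⊢; exact abs_of_pos h
  · rw [neg_one_mul] at h ⊢; exact abs_of_neg (by linarith)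

lemma conv1' (c z θ p : ℝ) (hc : c = 1 ∨ c = -1) (hz : 0 < c * z) (hθ : 0 < θ) :
    |z| ^ p / θ ^ (p - 1) = (c * z) ^ p * θ ^ (1 - p) := by
  rw [abs_eq_mul' c z hc hz, show (1 : ℝ) - p = -(p - 1) by ring, Real.rpow_neg hθ.le,
    div_eq_mul_inv]

lemma conv2' (c z θ p : ℝ) (hc : c = 1 ∨ c = -1) (hz : 0 < c * z) (hθ : 0 < θ) :
    |z| ^ (p / 2) / θ ^ (p / 2) = (c * z) ^ (p / 2) * θ ^ (-(p / 2)) := by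
  rw [abs_eq_mul' c z hc hz, Real.rpow_neg hθ.le, div_eq_mul_inv]

lemma rpow_split2 {a : ℝ} (ha : 0 < a) {s u w : ℝ} (h : s + u = w) : a ^ w = a ^ s * a ^ u := by
  rw [← h, Real.rpow_add ha]

lemma rpow_split2' {a : ℝ} (ha : 0 < a) {s w : ℝ} (h : s + 1 = w) : a ^ w = a ^ s * a := by
  rw [← h, Real.rpow_add ha, Real.rpow_one]

lemma rpow_split3 {a : ℝ} (ha : 0 < a) {s u w : ℝ} (h : s + u + 1 = w) :
    a ^ w = a ^ s * a ^ u * a := by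
  rw [← h, Real.rpow_add ha, Real.rpow_add ha, Real.rpow_one]

lemma perI (ε p a θ c vv vi ti vii tii bi dbi A0 A1 A2 Q Q1 R0 R1 R2 S0 S1 : ℝ)
    (hc : c = 1 ∨ c = -1) (hp : p ≠ 0) (hvv : vv = c * a)
    (hA0 : A0 = Q1 * Q1 * a * a) (hA1 : A1 = Q1 * Q1 * a) (hA2 : A2 = Q1 * Q1)
    (hQ : Q = Q1 * a)
    (hR0 : R0 = S1 * S1 * θ * θ * θ) (hR1 : R1 = S1 * S1 * θ * θ) (hR2 : R2 = S1 * S1 * θ)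
    (hS0 : S0 = S1 * θ) :
    (p * A1 * R0 * (c * (ε * vii - (bi * vi + vv * dbi)))
        + (1 - p) * R1 * A0 * (ε * tii - (bi * ti + θ * dbi))
      + (bi * (p * A1 * R0 * (c * vi) + (1 - p) * R1 * A0 * ti) + A0 * R0 * dbi))
      + ε * (4 * (p - 1) / p) * θ * (p / 2 * Q1 * S0 * (c * vi) + -(p / 2) * S1 * Q * ti) ^ 2
    = ε * (p * ((p - 1) * A2 * R0 * (c * vi) * (c * vi) + (1 - p) * R1 * A1 * (c * vi) * ti
            + A1 * R0 * (c * vii))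
        + (1 - p) * ((1 - p - 1) * R2 * A0 * ti * ti + p * A1 * R1 * ti * (c * vi)
            + R1 * A0 * tii)) := by
  subst hvv hA0 hA1 hA2 hQ hR0 hR1 hR2 hS0
  rcases hc with h | h <;> subst h <;> field_simp <;> ring

lemma sum_helper1 {n : ℕ} (k e : ℝ) (f g : Fin n → ℝ) :
    k * (e * ∑ i, f i - ∑ i, g i) = ∑ i, k * (e * f i - g i) := by
  simp only [mul_sub, Finset.mul_sum, Finset.sum_sub_distrib]

lemma sum_helper2 {n : ℕ} (k c e : ℝ) (f g : Fin n → ℝ) :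
    k * (c * (e * ∑ i, f i - ∑ i, g i)) = ∑ i, k * (c * (e * f i - g i)) := by
  simp only [mul_sub, mul_add, Finset.mul_sum, Finset.sum_sub_distrib]

/-- The pointwise entropy identity for `|v|^p/Θ^{p-1}`:
if `Θ > 0` solves `Θ_t + div(bΘ) = ε ΔΘ` and `v` solves `v_t + div(bv) = ε Δv`,
then at every point where `v ≠ 0`,
`∂_t(|v|^p/Θ^{p-1}) + div(b |v|^p/Θ^{p-1})
  + ε (4(p-1)/p) Θ |∇(|v|^{p/2}/Θ^{p/2})|² = ε Δ(|v|^p/Θ^{p-1})`. -/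
theorem stmt11 (n : ℕ) (hn : 0 < n)
    (ε : ℝ) (hε : 0 < ε)
    (p : ℝ) (hp : 1 < p)
    (b : ℝ → (Fin n → ℝ) → (Fin n → ℝ))
    (hb : ContDiff ℝ (⊤ : ℕ∞) (Function.uncurry b))
    (hbper : ∀ t i, TorusFun₁₁ (fun x => b t x i))
    (Θ v : ℝ → (Fin n → ℝ) → ℝ)
    (hΘ : ContDiff ℝ (⊤ : ℕ∞) (Function.uncurry Θ))
    (hΘper : ∀ t, TorusFun₁₁ (Θ t))
    (hΘpos : ∀ t x, 0 ≤ t → 0 < Θ t x)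
    (hΘPDE : ∀ t x, 0 ≤ t →
      deriv (fun s => Θ s x) t + ∑ i, pderiv₁₁ i (fun y => b t y i * Θ t y) x
        = ε * ∑ i, pderiv₁₁ i (pderiv₁₁ i (Θ t)) x)
    (hv : ContDiff ℝ (⊤ : ℕ∞) (Function.uncurry v))
    (hvper : ∀ t, TorusFun₁₁ (v t))
    (hvPDE : ∀ t x, 0 ≤ t →
      deriv (fun s => v s x) t + ∑ i, pderiv₁₁ i (fun y => b t y i * v t y) x
        = ε * ∑ i, pderiv₁₁ i (pderiv₁₁ i (v t)) x) :
    ∀ t x, 0 ≤ t → v t x ≠ 0 →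
      deriv (fun s => |v s x| ^ p / Θ s x ^ (p - 1)) t
          + ∑ i, pderiv₁₁ i (fun y => b t y i * (|v t y| ^ p / Θ t y ^ (p - 1))) x
          + ε * (4 * (p - 1) / p) * Θ t x *
              ∑ i, (pderiv₁₁ i (fun y => |v t y| ^ (p / 2) / Θ t y ^ (p / 2)) x) ^ 2
        = ε * ∑ i, pderiv₁₁ i (pderiv₁₁ i (fun y => |v t y| ^ p / Θ t y ^ (p - 1))) x := by
  intro t x ht hvx
  -- sign
  obtain ⟨c, hc, hcv⟩ : ∃ c : ℝ, (c = 1 ∨ c = -1) ∧ 0 < c * v t x := by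
    rcases hvx.lt_or_gt with h | h
    · exact ⟨-1, Or.inr rfl, by nlinarith⟩
    · exact ⟨1, Or.inl rfl, by nlinarith⟩
  have hc2 : c * c = 1 := by rcases hc with rfl | rfl <;> norm_num
  -- smoothness of slices
  have hvs : ContDiff ℝ (⊤ : ℕ∞) (v t) := hv.comp ((contDiff_const (c := t)).prodMk contDiff_id)
  have hTs : ContDiff ℝ (⊤ : ℕ∞) (Θ t) := hΘ.comp ((contDiff_const (c := t)).prodMk contDiff_id)
  have hbs : ∀ i : Fin n, ContDiff ℝ (⊤ : ℕ∞) (fun y => b t y i) := fun i =>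
    contDiff_pi.mp (hb.comp ((contDiff_const (c := t)).prodMk contDiff_id)) i
  have hvts : ContDiff ℝ (⊤ : ℕ∞) (fun s => v s x) := hv.comp (contDiff_id.prodMk contDiff_const)
  have hTts : ContDiff ℝ (⊤ : ℕ∞) (fun s => Θ s x) := hΘ.comp (contDiff_id.prodMk contDiff_const)
  have hθp : ∀ y, 0 < Θ t y := fun y => hΘpos t y ht
  -- HasFDerivAt families
  have hVfd : ∀ y, HasFDerivAt (v t) (fderiv ℝ (v t) y) y := fun y =>
    ((hvs.differentiable (by simp)) y).hasFDerivAt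
  have hTfd : ∀ y, HasFDerivAt (Θ t) (fderiv ℝ (Θ t) y) y := fun y =>
    ((hTs.differentiable (by simp)) y).hasFDerivAt
  have hWfd : ∀ y, HasFDerivAt (fun y' => c * v t y') (c • fderiv ℝ (v t) y) y := fun y =>
    (hVfd y).const_mul c
  have hbfd : ∀ (i : Fin n) y, HasFDerivAt (fun y' => b t y' i)
      (fderiv ℝ (fun y' => b t y' i) y) y := fun i y =>
    (((hbs i).differentiable (by simp)) y).hasFDerivAt
  -- eventual positivity
  have hWnx : ∀ᶠ y in 𝓝 x, 0 < c * v t y :=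
    (continuous_const.mul hvs.continuous).continuousAt.eventually (eventually_gt_nhds hcv)
  -- time derivative
  have h1t : ∀ᶠ s in 𝓝 t, 0 < c * v s x :=
    (continuous_const.mul hvts.continuous).continuousAt.eventually (eventually_gt_nhds hcv)
  have h2t : ∀ᶠ s in 𝓝 t, 0 < Θ s x :=
    hTts.continuous.continuousAt.eventually (eventually_gt_nhds (hθp x))
  have hevt : (fun s => |v s x| ^ p / Θ s x ^ (p - 1))
      =ᶠ[𝓝 t] fun s => (c * v s x) ^ p * Θ s x ^ (1 - p) := by
    filter_upwards [h1t, h2t] with s hs1 hs2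
    exact conv1' c _ _ p hc hs1 hs2
  have hTt : deriv (fun s => |v s x| ^ p / Θ s x ^ (p - 1)) t
      = p * (c * v t x) ^ (p - 1) * Θ t x ^ (1 - p) * (c * deriv (fun s => v s x) t)
        + (1 - p) * Θ t x ^ (1 - p - 1) * (c * v t x) ^ p * deriv (fun s => Θ s x) t := by
    rw [hevt.deriv_eq]
    exact (hd_rpow_mul
      ((((hvts.differentiable (by simp)) t).hasDerivAt).const_mul c)
      (((hTts.differentiable (by simp)) t).hasDerivAt)
      hcv.ne' (hθp x).ne' p (1 - p)).deriv
  -- PDE rearrangement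
  have hPv : ∀ i : Fin n, pderiv₁₁ i (fun y => b t y i * v t y) x
      = b t x i * pderiv₁₁ i (v t) x + v t x * pderiv₁₁ i (fun y => b t y i) x := fun i =>
    pd_mul' i (((hbs i).differentiable (by simp)) x)
      ((hvs.differentiable (by simp)) x)
  have hPθ : ∀ i : Fin n, pderiv₁₁ i (fun y => b t y i * Θ t y) x
      = b t x i * pderiv₁₁ i (Θ t) x + Θ t x * pderiv₁₁ i (fun y => b t y i) x := fun i =>
    pd_mul' i (((hbs i).differentiable (by simp)) x)
      ((hTs.differentiable (by simp)) x)
  have hvt : deriv (fun s => v s x) t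
      = ε * ∑ i, pderiv₁₁ i (pderiv₁₁ i (v t)) x
        - ∑ i, (b t x i * pderiv₁₁ i (v t) x + v t x * pderiv₁₁ i (fun y => b t y i) x) := by
    have h := hvPDE t x ht
    rw [Finset.sum_congr rfl (fun i _ => hPv i)] at h
    linarith
  have hθt : deriv (fun s => Θ s x) t
      = ε * ∑ i, pderiv₁₁ i (pderiv₁₁ i (Θ t)) x
        - ∑ i, (b t x i * pderiv₁₁ i (Θ t) x + Θ t x * pderiv₁₁ i (fun y => b t y i) x) := by
    have h := hΘPDE t x ht
    rw [Finset.sum_congr rfl (fun i _ => hPθ i)] at h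
    linarith
  -- spatial eventual equalities
  have hevx : (fun y => |v t y| ^ p / Θ t y ^ (p - 1))
      =ᶠ[𝓝 x] fun y => (c * v t y) ^ p * Θ t y ^ (1 - p) := by
    filter_upwards [hWnx] with y hy
    exact conv1' c _ _ p hc hy (hθp y)
  have hevx2 : (fun y => |v t y| ^ (p / 2) / Θ t y ^ (p / 2))
      =ᶠ[𝓝 x] fun y => (c * v t y) ^ (p / 2) * Θ t y ^ (-(p / 2)) := by
    filter_upwards [hWnx] with y hy
    exact conv2' c _ _ p hc hy (hθp y)
  -- first spatial derivative of Φ on the positivity region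
  have hpdΦ : ∀ (i : Fin n) y, 0 < c * v t y →
      pderiv₁₁ i (fun y' => (c * v t y') ^ p * Θ t y' ^ (1 - p)) y
        = p * (c * v t y) ^ (p - 1) * Θ t y ^ (1 - p) * (c * pderiv₁₁ i (v t) y)
          + (1 - p) * Θ t y ^ (1 - p - 1) * (c * v t y) ^ p * pderiv₁₁ i (Θ t) y := by
    intro i y hy
    have h := pd_rpow_mul i (hWfd y) (hTfd y) hy.ne' (hθp y).ne' p (1 - p)
    simp only [ContinuousLinearMap.coe_smul', Pi.smul_apply, smul_eq_mul] at h
    exact h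
  -- term 2: div term
  have h1 : ∀ i : Fin n,
      pderiv₁₁ i (fun y => b t y i * (|v t y| ^ p / Θ t y ^ (p - 1))) x
        = b t x i * (p * (c * v t x) ^ (p - 1) * Θ t x ^ (1 - p) * (c * pderiv₁₁ i (v t) x)
              + (1 - p) * Θ t x ^ (1 - p - 1) * (c * v t x) ^ p * pderiv₁₁ i (Θ t) x)
          + (c * v t x) ^ p * Θ t x ^ (1 - p) * pderiv₁₁ i (fun y => b t y i) x := by
    intro i
    have hev : (fun y => b t y i * (|v t y| ^ p / Θ t y ^ (p - 1)))
        =ᶠ[𝓝 x] fun y => b t y i * ((c * v t y) ^ p * Θ t y ^ (1 - p)) := by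
      filter_upwards [hevx] with y hy
      rw [hy]
    rw [pd_congr' i hev,
      pd_mul' i (((hbs i).differentiable (by simp)) x)
        (hfd_rpow_mul (hWfd x) (hTfd x) hcv.ne' (hθp x).ne' p (1 - p)).differentiableAt,
      hpdΦ i x hcv]
  -- term 3: gradient of |v|^{p/2}/Θ^{p/2}
  have h2 : ∀ i : Fin n,
      pderiv₁₁ i (fun y => |v t y| ^ (p / 2) / Θ t y ^ (p / 2)) x
        = p / 2 * (c * v t x) ^ (p / 2 - 1) * Θ t x ^ (-(p / 2)) * (c * pderiv₁₁ i (v t) x)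
          + -(p / 2) * Θ t x ^ (-(p / 2) - 1) * (c * v t x) ^ (p / 2) * pderiv₁₁ i (Θ t) x := by
    intro i
    rw [pd_congr' i hevx2]
    have h := pd_rpow_mul i (hWfd x) (hTfd x) hcv.ne' (hθp x).ne' (p / 2) (-(p / 2))
    simp only [ContinuousLinearMap.coe_smul', Pi.smul_apply, smul_eq_mul] at h
    exact h
  -- second derivatives
  have h3 : ∀ i : Fin n,
      pderiv₁₁ i (pderiv₁₁ i (fun y => |v t y| ^ p / Θ t y ^ (p - 1))) x
        = p * ((p - 1) * (c * v t x) ^ (p - 1 - 1) * Θ t x ^ (1 - p) * (c * pderiv₁₁ i (v t) x)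
                * (c * pderiv₁₁ i (v t) x)
              + (1 - p) * Θ t x ^ (1 - p - 1) * (c * v t x) ^ (p - 1) * (c * pderiv₁₁ i (v t) x)
                * pderiv₁₁ i (Θ t) x
              + (c * v t x) ^ (p - 1) * Θ t x ^ (1 - p) * (c * pderiv₁₁ i (pderiv₁₁ i (v t)) x))
          + (1 - p) * ((1 - p - 1) * Θ t x ^ (1 - p - 1 - 1) * (c * v t x) ^ p
                * pderiv₁₁ i (Θ t) x * pderiv₁₁ i (Θ t) x
              + p * (c * v t x) ^ (p - 1) * Θ t x ^ (1 - p - 1) * pderiv₁₁ i (Θ t) x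
                * (c * pderiv₁₁ i (v t) x)
              + Θ t x ^ (1 - p - 1) * (c * v t x) ^ p * pderiv₁₁ i (pderiv₁₁ i (Θ t)) x) := by
    intro i
    have hDvi : ContDiff ℝ (⊤ : ℕ∞) (pderiv₁₁ i (v t)) :=
      (hvs.fderiv_right (by exact_mod_cast le_top)).clm_apply contDiff_const
    have hDti : ContDiff ℝ (⊤ : ℕ∞) (pderiv₁₁ i (Θ t)) :=
      (hTs.fderiv_right (by exact_mod_cast le_top)).clm_apply contDiff_const
    have hev2 : pderiv₁₁ i (fun y => |v t y| ^ p / Θ t y ^ (p - 1)) =ᶠ[𝓝 x]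
        fun y => p * ((c * v t y) ^ (p - 1) * Θ t y ^ (1 - p) * (c * pderiv₁₁ i (v t) y))
          + (1 - p) * (Θ t y ^ (1 - p - 1) * (c * v t y) ^ p * pderiv₁₁ i (Θ t) y) := by
      filter_upwards [hevx.fderiv (𝕜 := ℝ), hWnx] with y hy hwy
      have e1 : pderiv₁₁ i (fun y => |v t y| ^ p / Θ t y ^ (p - 1)) y
          = pderiv₁₁ i (fun y' => (c * v t y') ^ p * Θ t y' ^ (1 - p)) y := by
        rw [pderiv_def', pderiv_def', hy]
      rw [e1, hpdΦ i y hwy]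
      ring
    have HA := hfd_rpow_mul3 (hWfd x) (hTfd x)
      (((hDvi.differentiable (by simp)) x).hasFDerivAt.const_mul c)
      hcv.ne' (hθp x).ne' (p - 1) (1 - p)
    have HB := hfd_rpow_mul3 (hTfd x) (hWfd x)
      (((hDti.differentiable (by simp)) x).hasFDerivAt)
      (hθp x).ne' hcv.ne' (1 - p - 1) p
    have HF := (HA.const_mul p).add (HB.const_mul (1 - p))
    rw [pd_congr' i hev2, pderiv_def', HasFDerivAt.fderiv
      (f := fun y => p * ((c * v t y) ^ (p - 1) * Θ t y ^ (1 - p) * (c * pderiv₁₁ i (v t) y))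
        + (1 - p) * (Θ t y ^ (1 - p - 1) * (c * v t y) ^ p * pderiv₁₁ i (Θ t) y)) HF]
    simp only [ContinuousLinearMap.add_apply, ContinuousLinearMap.coe_smul', Pi.smul_apply,
      smul_eq_mul, pderiv_def']
    try ring
  -- assemble
  have hL : deriv (fun s => |v s x| ^ p / Θ s x ^ (p - 1)) t
      = ∑ i, (p * (c * v t x) ^ (p - 1) * Θ t x ^ (1 - p)
            * (c * (ε * pderiv₁₁ i (pderiv₁₁ i (v t)) x
                - (b t x i * pderiv₁₁ i (v t) x + v t x * pderiv₁₁ i (fun y => b t y i) x)))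
          + (1 - p) * Θ t x ^ (1 - p - 1) * (c * v t x) ^ p
            * (ε * pderiv₁₁ i (pderiv₁₁ i (Θ t)) x
                - (b t x i * pderiv₁₁ i (Θ t) x + Θ t x * pderiv₁₁ i (fun y => b t y i) x))) := by
    rw [hTt, hvt, hθt, sum_helper2, sum_helper1, ← Finset.sum_add_distrib]
  have hS1 : ∑ i, pderiv₁₁ i (fun y => b t y i * (|v t y| ^ p / Θ t y ^ (p - 1))) x
      = ∑ i, (b t x i * (p * (c * v t x) ^ (p - 1) * Θ t x ^ (1 - p) * (c * pderiv₁₁ i (v t) x)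
              + (1 - p) * Θ t x ^ (1 - p - 1) * (c * v t x) ^ p * pderiv₁₁ i (Θ t) x)
          + (c * v t x) ^ p * Θ t x ^ (1 - p) * pderiv₁₁ i (fun y => b t y i) x) :=
    Finset.sum_congr rfl fun i _ => h1 i
  have hS2 : ∑ i, (pderiv₁₁ i (fun y => |v t y| ^ (p / 2) / Θ t y ^ (p / 2)) x) ^ 2
      = ∑ i, (p / 2 * (c * v t x) ^ (p / 2 - 1) * Θ t x ^ (-(p / 2)) * (c * pderiv₁₁ i (v t) x)
          + -(p / 2) * Θ t x ^ (-(p / 2) - 1) * (c * v t x) ^ (p / 2) * pderiv₁₁ i (Θ t) x) ^ 2 :=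
    Finset.sum_congr rfl fun i _ => by rw [h2 i]
  have hS3 : ∑ i, pderiv₁₁ i (pderiv₁₁ i (fun y => |v t y| ^ p / Θ t y ^ (p - 1))) x
      = ∑ i, (p * ((p - 1) * (c * v t x) ^ (p - 1 - 1) * Θ t x ^ (1 - p)
                * (c * pderiv₁₁ i (v t) x) * (c * pderiv₁₁ i (v t) x)
              + (1 - p) * Θ t x ^ (1 - p - 1) * (c * v t x) ^ (p - 1) * (c * pderiv₁₁ i (v t) x)
                * pderiv₁₁ i (Θ t) x
              + (c * v t x) ^ (p - 1) * Θ t x ^ (1 - p) * (c * pderiv₁₁ i (pderiv₁₁ i (v t)) x))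
          + (1 - p) * ((1 - p - 1) * Θ t x ^ (1 - p - 1 - 1) * (c * v t x) ^ p
                * pderiv₁₁ i (Θ t) x * pderiv₁₁ i (Θ t) x
              + p * (c * v t x) ^ (p - 1) * Θ t x ^ (1 - p - 1) * pderiv₁₁ i (Θ t) x
                * (c * pderiv₁₁ i (v t) x)
              + Θ t x ^ (1 - p - 1) * (c * v t x) ^ p * pderiv₁₁ i (pderiv₁₁ i (Θ t)) x)) :=
    Finset.sum_congr rfl fun i _ => h3 i
  rw [hL, hS1, hS2, hS3]
  simp only [Finset.mul_sum]
  rw [← Finset.sum_add_distrib, ← Finset.sum_add_distrib]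
  refine Finset.sum_congr rfl fun i _ => ?_
  -- rpow relations
  have hθx : 0 < Θ t x := hθp x
  have hA2 : (c * v t x) ^ (p - 1 - 1)
      = (c * v t x) ^ (p / 2 - 1) * (c * v t x) ^ (p / 2 - 1) := rpow_split2 hcv (by ring)
  have hA1 : (c * v t x) ^ (p - 1)
      = (c * v t x) ^ (p / 2 - 1) * (c * v t x) ^ (p / 2 - 1) * (c * v t x) :=
    rpow_split3 hcv (by ring)
  have hA0 : (c * v t x) ^ p
      = (c * v t x) ^ (p / 2 - 1) * (c * v t x) ^ (p / 2 - 1) * (c * v t x) * (c * v t x) := by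
    rw [rpow_split2' hcv (show p - 1 + 1 = p by ring), hA1]
  have hQ : (c * v t x) ^ (p / 2) = (c * v t x) ^ (p / 2 - 1) * (c * v t x) :=
    rpow_split2' hcv (by ring)
  have hR2 : Θ t x ^ (1 - p - 1 - 1)
      = Θ t x ^ (-(p / 2) - 1) * Θ t x ^ (-(p / 2) - 1) * Θ t x := rpow_split3 hθx (by ring)
  have hR1 : Θ t x ^ (1 - p - 1)
      = Θ t x ^ (-(p / 2) - 1) * Θ t x ^ (-(p / 2) - 1) * Θ t x * Θ t x := by
    rw [rpow_split2' hθx (show 1 - p - 1 - 1 + 1 = 1 - p - 1 by ring), hR2]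
  have hR0 : Θ t x ^ (1 - p)
      = Θ t x ^ (-(p / 2) - 1) * Θ t x ^ (-(p / 2) - 1) * Θ t x * Θ t x * Θ t x := by
    rw [rpow_split2' hθx (show 1 - p - 1 + 1 = 1 - p by ring), hR1]
  have hS0 : Θ t x ^ (-(p / 2)) = Θ t x ^ (-(p / 2) - 1) * Θ t x := rpow_split2' hθx (by ring)
  have hvv : v t x = c * (c * v t x) := by rw [← mul_assoc, hc2, one_mul]
  exact perI ε p (c * v t x) (Θ t x) c (v t x)
    (pderiv₁₁ i (v t) x) (pderiv₁₁ i (Θ t) x)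
    (pderiv₁₁ i (pderiv₁₁ i (v t)) x) (pderiv₁₁ i (pderiv₁₁ i (Θ t)) x)
    (b t x i) (pderiv₁₁ i (fun y => b t y i) x)
    ((c * v t x) ^ p) ((c * v t x) ^ (p - 1)) ((c * v t x) ^ (p - 1 - 1))
    ((c * v t x) ^ (p / 2)) ((c * v t x) ^ (p / 2 - 1))
    (Θ t x ^ (1 - p)) (Θ t x ^ (1 - p - 1)) (Θ t x ^ (1 - p - 1 - 1))
    (Θ t x ^ (-(p / 2))) (Θ t x ^ (-(p / 2) - 1))
    hc (by positivity) hvv hA0 hA1 hA2 hQ hR0 hR1 hR2 hS0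
end

section
/- Let ε > 0, δ > 0, C > 0, and let g : [0, εδ] → [0,∞) be a continuous function satisfying g(t) ≤ C ( ε^{−1} + ∫_0^t (ε(t−τ))^{−1/2} g(τ) dτ ) for all t ∈ [0, εδ]. If δ ≤ 1/(16 C²), then g(t) ≤ 2C ε^{−1} for all t ∈ [0, εδ]. -/
open MeasureTheory intervalIntegral

lemma stmt14_aux (ε t : ℝ) (hε : 0 < ε) (ht : 0 ≤ t) :
    IntervalIntegrable (fun τ => (Real.sqrt (ε * (t - τ)))⁻¹) volume 0 t ∧
    (∫ τ in (0:ℝ)..t, (Real.sqrt (ε * (t - τ)))⁻¹) = 2 * Real.sqrt t / Real.sqrt ε := by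
  have heq : Set.EqOn (fun τ => (Real.sqrt ε)⁻¹ * (t - τ) ^ (-(1/2) : ℝ))
      (fun τ => (Real.sqrt (ε * (t - τ)))⁻¹) (Set.uIcc 0 t) := by
    intro τ hτ
    rw [Set.uIcc_of_le ht] at hτ
    have h1 : (0:ℝ) ≤ t - τ := by linarith [hτ.2]
    simp only
    rw [Real.sqrt_mul hε.le, mul_inv, Real.rpow_neg h1]
    congr 2
    rw [Real.sqrt_eq_rpow]
  have hint : IntervalIntegrable (fun τ => (Real.sqrt ε)⁻¹ * (t - τ) ^ (-(1/2) : ℝ))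
      volume 0 t := by
    have h := (intervalIntegrable_rpow' (a := 0) (b := t) (r := -(1/2))
      (by norm_num)).comp_sub_left t
    simpa using (h.const_mul (Real.sqrt ε)⁻¹).symm
  have hint' : IntervalIntegrable (fun τ => (Real.sqrt (ε * (t - τ)))⁻¹) volume 0 t := by
    rw [intervalIntegrable_iff] at hint ⊢
    exact hint.congr_fun (fun x hx => heq (Set.uIoc_subset_uIcc hx)) measurableSet_uIoc
  refine ⟨hint', ?_⟩
  rw [← integral_congr heq, intervalIntegral.integral_const_mul,
    integral_comp_sub_left (fun x => x ^ (-(1/2) : ℝ)) t]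
  simp only [sub_self, sub_zero]
  have h0 : (0:ℝ) ^ ((-(1/2):ℝ) + 1) = 0 := Real.zero_rpow (by norm_num)
  rw [integral_rpow (Or.inl (by norm_num)), h0, Real.sqrt_eq_rpow t,
    show (-(1/2):ℝ) + 1 = 1/2 by norm_num]
  ring

/-- Singular Gronwall absorption: if a continuous nonnegative
`g` on `[0, εδ]` satisfies
`g(t) ≤ C (ε⁻¹ + ∫₀ᵗ (ε(t-τ))^{-1/2} g(τ) dτ)` and `δ ≤ 1/(16 C²)`,
then `g(t) ≤ 2C ε⁻¹` on `[0, εδ]`. -/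
theorem stmt14
    (ε δ C : ℝ) (hε : 0 < ε) (hδ : 0 < δ) (hC : 0 < C)
    (g : ℝ → ℝ)
    (hgcont : ContinuousOn g (Set.Icc 0 (ε * δ)))
    (hgnonneg : ∀ t ∈ Set.Icc 0 (ε * δ), 0 ≤ g t)
    (hgron : ∀ t ∈ Set.Icc 0 (ε * δ),
      g t ≤ C * (ε⁻¹ + ∫ τ in (0:ℝ)..t, (Real.sqrt (ε * (t - τ)))⁻¹ * g τ))
    (hδsmall : δ ≤ 1 / (16 * C ^ 2)) :
    ∀ t ∈ Set.Icc 0 (ε * δ), g t ≤ 2 * C * ε⁻¹ := by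
  have hεδ : (0:ℝ) ≤ ε * δ := by positivity
  obtain ⟨t₀, ht₀, hmax⟩ := isCompact_Icc.exists_isMaxOn (Set.nonempty_Icc.2 hεδ) hgcont
  have hmax' : ∀ t ∈ Set.Icc 0 (ε * δ), g t ≤ g t₀ := fun t ht => hmax ht
  set M := g t₀ with hMdef
  have hM0 : 0 ≤ M := hgnonneg t₀ ht₀
  suffices hkey : M ≤ 2 * C * ε⁻¹ by
    intro t ht; exact (hmax' t ht).trans hkey
  obtain ⟨ht₀0, ht₀le⟩ := ht₀
  obtain ⟨hfint, hfval⟩ := stmt14_aux ε t₀ hε ht₀0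
  -- subset fact
  have hsub : Set.uIcc 0 t₀ ⊆ Set.Icc 0 (ε * δ) := by
    rw [Set.uIcc_of_le ht₀0]
    exact Set.Icc_subset_Icc le_rfl ht₀le
  -- integrability of the products
  have hgc : ContinuousOn g (Set.uIcc 0 t₀) := hgcont.mono hsub
  have hint1 : IntervalIntegrable (fun τ => (Real.sqrt (ε * (t₀ - τ)))⁻¹ * g τ)
      volume 0 t₀ := hfint.mul_continuousOn hgc
  have hint2 : IntervalIntegrable (fun τ => (Real.sqrt (ε * (t₀ - τ)))⁻¹ * M)
      volume 0 t₀ := hfint.mul_const M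
  -- pointwise comparison
  have hmono : (∫ τ in (0:ℝ)..t₀, (Real.sqrt (ε * (t₀ - τ)))⁻¹ * g τ)
      ≤ ∫ τ in (0:ℝ)..t₀, (Real.sqrt (ε * (t₀ - τ)))⁻¹ * M := by
    apply integral_mono_on ht₀0 hint1 hint2
    intro x hx
    have hxmem : x ∈ Set.Icc 0 (ε * δ) := hsub (by rwa [Set.uIcc_of_le ht₀0])
    exact mul_le_mul_of_nonneg_left (hmax' x hxmem) (by positivity)
  have hval2 : (∫ τ in (0:ℝ)..t₀, (Real.sqrt (ε * (t₀ - τ)))⁻¹ * M)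
      = (2 * Real.sqrt t₀ / Real.sqrt ε) * M := by
    rw [intervalIntegral.integral_mul_const, hfval]
  -- bound on the sqrt quotient
  have hsq : Real.sqrt t₀ / Real.sqrt ε ≤ 1 / (4 * C) := by
    rw [div_le_div_iff₀ (Real.sqrt_pos.2 hε) (by positivity), one_mul]
    have h4C : Real.sqrt (16 * C ^ 2) = 4 * C := by
      rw [show (16:ℝ) * C ^ 2 = (4 * C) ^ 2 by ring, Real.sqrt_sq (by positivity)]
    have h1 : Real.sqrt t₀ * (4 * C) = Real.sqrt (t₀ * (16 * C ^ 2)) := by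
      rw [Real.sqrt_mul ht₀0, h4C]
    rw [h1]
    apply Real.sqrt_le_sqrt
    have h16 : (0:ℝ) < 16 * C ^ 2 := by positivity
    calc t₀ * (16 * C ^ 2) ≤ (ε * δ) * (16 * C ^ 2) := by nlinarith
      _ ≤ ε * (1 / (16 * C ^ 2)) * (16 * C ^ 2) :=
          mul_le_mul_of_nonneg_right (mul_le_mul_of_nonneg_left hδsmall hε.le) h16.le
      _ = ε := by field_simp
  have hε' : (0:ℝ) < Real.sqrt ε := Real.sqrt_pos.2 hε
  -- assemble
  have hG := hgron t₀ ⟨ht₀0, ht₀le⟩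
  have hchain : M ≤ C * ε⁻¹ + C * ((1 / (4 * C)) * M * 2) := by
    have h2 : (2 * Real.sqrt t₀ / Real.sqrt ε) * M ≤ (1 / (4 * C)) * M * 2 := by
      have : Real.sqrt t₀ / Real.sqrt ε * M ≤ (1 / (4 * C)) * M :=
        mul_le_mul_of_nonneg_right hsq hM0
      calc (2 * Real.sqrt t₀ / Real.sqrt ε) * M
          = (Real.sqrt t₀ / Real.sqrt ε * M) * 2 := by ring
        _ ≤ (1 / (4 * C)) * M * 2 := by linarith
    calc M ≤ C * (ε⁻¹ + ∫ τ in (0:ℝ)..t₀, (Real.sqrt (ε * (t₀ - τ)))⁻¹ * g τ) := hG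
      _ ≤ C * (ε⁻¹ + (1 / (4 * C)) * M * 2) := by
          apply mul_le_mul_of_nonneg_left _ hC.le
          have := hmono.trans (le_of_eq hval2)
          linarith [this.trans h2]
      _ = C * ε⁻¹ + C * ((1 / (4 * C)) * M * 2) := by ring
  have hCne : C ≠ 0 := ne_of_gt hC
  have : C * ((1 / (4 * C)) * M * 2) = M / 2 := by field_simp; ring
  rw [this] at hchain
  linarith
end

section
/- Let A : ℝ² → ℝ^{2×2} be smooth and suppose there are smooth functions λ_1, λ_2 : ℝ² → ℝ and smooth vector fields r_1, r_2, l_1, l_2 : ℝ² → ℝ² with A(u) r_i(u) = λ_i(u) r_i(u), l_i(u)·r_j(u) = δ_{ij}, and smooth Riemann invariants R_1, R_2 : ℝ² → ℝ with ∇_u R_i(u) = l_i(u). Assume the Temple condition ⟨l_i(u), (∇_u r_j(u)) r_j(u)⟩ = 0 for all i ≠ j and all u. Let ε > 0 and let u : [0,∞)×ℝ → ℝ² be a smooth solution of u_t + A(u) u_x = ε u_{xx}. Then there exist smooth functions D_{ij} : ℝ² → ℝ (depending only on λ, r, l and their derivatives) such that the functions R_i(t,x) = R_i(u(t,x)) satisfy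 ∂_t R_i + λ_i(u) ∂_x R_i = ε ∂_x² R_i + ε (∂_x R_i) Σ_{j=1}^2 D_{ij}(u) ∂_x R_j for i = 1, 2; equivalently, ∂_t R_i + λ̃_i ∂_x R_i = ε ∂_x² R_i with λ̃_i = λ_i(u) − ε Σ_{j=1}^2 D_{ij}(u) ∂_x R_j. -/
open Matrix


lemma hasDerivAt_dot {n : ℕ} {f g : ℝ → (Fin n → ℝ)} {x : ℝ} {f' g' : Fin n → ℝ}
    (hf : HasDerivAt f f' x) (hg : HasDerivAt g g' x) :
    HasDerivAt (fun y => f y ⬝ᵥ g y) (f' ⬝ᵥ g x + f x ⬝ᵥ g') x := by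
  simp only [dotProduct, ← Finset.sum_add_distrib]
  apply HasDerivAt.fun_sum
  intro k _
  have hfk : HasDerivAt (fun y => f y k) (f' k) x := by
    exact
      ((ContinuousLinearMap.proj (R := ℝ) (φ := fun _ : Fin n => ℝ) k).hasFDerivAt.comp_hasDerivAt x hf)
  have hgk : HasDerivAt (fun y => g y k) (g' k) x := by
    exact
      ((ContinuousLinearMap.proj (R := ℝ) (φ := fun _ : Fin n => ℝ) k).hasFDerivAt.comp_hasDerivAt x hg)
  exact (hfk.mul hgk).congr_deriv (by ring)

lemma fderiv_dot {n : ℕ} {f g : (Fin n → ℝ) → (Fin n → ℝ)} {w ξ : Fin n → ℝ}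
    (hf : DifferentiableAt ℝ f w) (hg : DifferentiableAt ℝ g w) :
    fderiv ℝ (fun w => f w ⬝ᵥ g w) w ξ = fderiv ℝ f w ξ ⬝ᵥ g w + f w ⬝ᵥ fderiv ℝ g w ξ := by
  have h : HasFDerivAt (fun w => f w ⬝ᵥ g w)
      (∑ k, (g w k • ((ContinuousLinearMap.proj k).comp (fderiv ℝ f w))
        + f w k • ((ContinuousLinearMap.proj k).comp (fderiv ℝ g w)))) w := by
    simp only [dotProduct]
    apply HasFDerivAt.fun_sum
    intro k _
    have hfk : HasFDerivAt (fun w => f w k) ((ContinuousLinearMap.proj k).comp (fderiv ℝ f w)) w := by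
      exact
        ((ContinuousLinearMap.proj (R := ℝ) (φ := fun _ : Fin n => ℝ) k).hasFDerivAt.comp w hf.hasFDerivAt)
    have hgk : HasFDerivAt (fun w => g w k) ((ContinuousLinearMap.proj k).comp (fderiv ℝ g w)) w := by
      exact
        ((ContinuousLinearMap.proj (R := ℝ) (φ := fun _ : Fin n => ℝ) k).hasFDerivAt.comp w hg.hasFDerivAt)
    exact (hfk.mul hgk).congr_fderiv (add_comm _ _)
  rw [h.fderiv]
  simp [dotProduct, Finset.sum_add_distrib, mul_comm]

lemma basis_expand {l r : Fin 2 → (Fin 2 → ℝ) → (Fin 2 → ℝ)} {w : Fin 2 → ℝ}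
    (hnorm : ∀ i j, l i w ⬝ᵥ r j w = if i = j then 1 else 0) (v : Fin 2 → ℝ) :
    v = ∑ j, (l j w ⬝ᵥ v) • r j w := by
  set L : Matrix (Fin 2) (Fin 2) ℝ := Matrix.of (fun i k => l i w k) with hL
  set Rm : Matrix (Fin 2) (Fin 2) ℝ := Matrix.of (fun k j => r j w k) with hRm
  have h1 : L * Rm = 1 := by
    ext i j
    simp only [Matrix.mul_apply, hL, hRm, Matrix.of_apply, Matrix.one_apply]
    simpa [dotProduct] using hnorm i j
  have h2 : Rm * L = 1 := mul_eq_one_comm.mp h1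
  have h3 : Rm *ᵥ (L *ᵥ v) = v := by
    rw [Matrix.mulVec_mulVec, h2, Matrix.one_mulVec]
  funext k
  have := congrFun h3 k
  simp only [Matrix.mulVec, dotProduct, hL, hRm, Matrix.of_apply] at this
  rw [Finset.sum_apply]
  rw [← this]
  congr 1
  ext j
  simp [dotProduct, mul_comm]

lemma dot_smooth {n : ℕ} {f g : (Fin n → ℝ) → (Fin n → ℝ)}
    (hf : ContDiff ℝ (⊤ : ℕ∞) f) (hg : ContDiff ℝ (⊤ : ℕ∞) g) :
    ContDiff ℝ (⊤ : ℕ∞) (fun w => f w ⬝ᵥ g w) := by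
  simp only [dotProduct]
  exact ContDiff.sum fun k _ => (contDiff_pi.1 hf k).mul (contDiff_pi.1 hg k)

lemma quad_identity (c : Fin 2 → ℝ) (B : Fin 2 → Fin 2 → ℝ) (i : Fin 2)
    (h : ∀ k, k ≠ i → B k k = 0) :
    ∑ j, ∑ k, c j * c k * B j k
      = c i * ∑ j, (if j = i then B i i else B i j + B j i) * c j := by
  fin_cases i
  · have h1 : B 1 1 = 0 := h 1 (by decide)
    simp [Fin.sum_univ_two, h1]
    ring
  · have h0 : B 0 0 = 0 := h 0 (by decide)
    simp [Fin.sum_univ_two, h0]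
    ring

/-- For a smooth `2×2` hyperbolic system with eigenvalues `λᵢ`,
eigenvectors `rᵢ, lᵢ` (normalized `lᵢ·rⱼ = δᵢⱼ`), Riemann invariants `Rᵢ` with
`∇Rᵢ = lᵢ`, satisfying the Temple condition `⟨lᵢ, (∇rⱼ)rⱼ⟩ = 0` for `i ≠ j`:
for any smooth solution of `u_t + A(u)u_x = ε u_xx` there are smooth functions
`Dᵢⱼ` such that `Rᵢ(u)` satisfies
`∂_t Rᵢ + λᵢ(u) ∂_x Rᵢ = ε ∂_x² Rᵢ + ε (∂_x Rᵢ) Σⱼ Dᵢⱼ(u) ∂_x Rⱼ`. -/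
theorem stmt15
    (A : (Fin 2 → ℝ) → Matrix (Fin 2) (Fin 2) ℝ)
    (hA : ∀ i j, ContDiff ℝ (⊤ : ℕ∞) (fun w => A w i j))
    (lam : Fin 2 → (Fin 2 → ℝ) → ℝ)
    (r l : Fin 2 → (Fin 2 → ℝ) → (Fin 2 → ℝ))
    (hlam : ∀ i, ContDiff ℝ (⊤ : ℕ∞) (lam i))
    (hr : ∀ i, ContDiff ℝ (⊤ : ℕ∞) (r i))
    (hl : ∀ i, ContDiff ℝ (⊤ : ℕ∞) (l i))
    (heig : ∀ w i, A w *ᵥ r i w = lam i w • r i w)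
    (hnorm : ∀ w i j, l i w ⬝ᵥ r j w = if i = j then 1 else 0)
    (R : Fin 2 → (Fin 2 → ℝ) → ℝ)
    (hR : ∀ i, ContDiff ℝ (⊤ : ℕ∞) (R i))
    (hgrad : ∀ i w ξ, fderiv ℝ (R i) w ξ = l i w ⬝ᵥ ξ)
    (hTemple : ∀ w i j, i ≠ j → l i w ⬝ᵥ fderiv ℝ (r j) w (r j w) = 0)
    (ε : ℝ) (hε : 0 < ε)
    (u : ℝ → ℝ → (Fin 2 → ℝ))
    (hu : ContDiff ℝ (⊤ : ℕ∞) (Function.uncurry u))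
    (hPDE : ∀ t x, 0 ≤ t →
      deriv (fun s => u s x) t + A (u t x) *ᵥ deriv (fun y => u t y) x
        = ε • deriv (deriv (u t)) x) :
    ∃ D : Fin 2 → Fin 2 → (Fin 2 → ℝ) → ℝ,
      (∀ i j, ContDiff ℝ (⊤ : ℕ∞) (D i j)) ∧
      ∀ i t x, 0 ≤ t →
        deriv (fun s => R i (u s x)) t + lam i (u t x) * deriv (fun y => R i (u t y)) x
          = ε * deriv (deriv (fun y => R i (u t y))) x
            + ε * deriv (fun y => R i (u t y)) x *
                ∑ j, D i j (u t x) * deriv (fun y => R j (u t y)) x := by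
  classical
  -- the coefficient functions
  set Bf : Fin 2 → Fin 2 → Fin 2 → (Fin 2 → ℝ) → ℝ :=
    fun i j k w => fderiv ℝ (l i) w (r j w) ⬝ᵥ r k w with hBf
  refine ⟨fun i j w => -(if j = i then Bf i i i w else Bf i i j w + Bf i j i w), ?_, ?_⟩
  · intro i j
    have hBsm : ∀ i j k : Fin 2, ContDiff ℝ (⊤ : ℕ∞) (Bf i j k) := fun i j k =>
      dot_smooth (((hl i).fderiv_right (le_refl _)).clm_apply (hr j)) (hr k)
    by_cases h : j = i <;> simp only [h, if_true, if_false] <;>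
      first
        | exact (hBsm i i i).neg
        | exact ((hBsm i i j).add (hBsm i j i)).neg
  intro i t x ht
  set w := u t x with hw
  -- differentiability of sections
  have hux_fun : ContDiff ℝ (⊤ : ℕ∞) (u t) :=
    hu.comp (contDiff_const.prodMk contDiff_id)
  have hut_fun : ContDiff ℝ (⊤ : ℕ∞) (fun s => u s x) :=
    hu.comp (contDiff_id.prodMk contDiff_const)
  set ux : Fin 2 → ℝ := deriv (u t) x with hux
  set uxx : Fin 2 → ℝ := deriv (deriv (u t)) x with huxx
  set ut : Fin 2 → ℝ := deriv (fun s => u s x) t with hut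
  have hRd : ∀ j w', DifferentiableAt ℝ (R j) w' := fun j w' =>
    ((hR j).differentiable (by simp)) w'
  -- spatial derivative of R j ∘ u t
  have key1 : ∀ (j : Fin 2) (y : ℝ),
      deriv (fun z => R j (u t z)) y = l j (u t y) ⬝ᵥ deriv (u t) y := by
    intro j y
    have := fderiv_comp_deriv (l := R j) (f := u t) y (hRd j (u t y))
      ((hux_fun.differentiable (by simp)) y)
    rw [show (fun z => R j (u t z)) = (R j) ∘ (u t) from rfl, this, hgrad]
  -- time derivative
  have key2 : deriv (fun s => R i (u s x)) t = l i w ⬝ᵥ ut := by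
    have := fderiv_comp_deriv (l := R i) (f := fun s => u s x) t (hRd i (u t x))
      ((hut_fun.differentiable (by simp)) t)
    rw [show (fun s => R i (u s x)) = (R i) ∘ (fun s => u s x) from rfl, this, hgrad]
  -- second spatial derivative
  have hdux : ContDiff ℝ (⊤ : ℕ∞) (deriv (u t)) :=
    (contDiff_infty_iff_deriv.mp hux_fun).2
  have key3 : deriv (deriv (fun y => R i (u t y))) x
      = fderiv ℝ (l i) w ux ⬝ᵥ ux + l i w ⬝ᵥ uxx := by
    have hfun : deriv (fun z => R i (u t z)) = fun y => l i (u t y) ⬝ᵥ deriv (u t) y :=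
      funext (key1 i)
    rw [hfun]
    have hf' : HasDerivAt (fun y => l i (u t y)) (fderiv ℝ (l i) w ux) x :=
      (((hl i).differentiable (by simp)) w).hasFDerivAt.comp_hasDerivAt x
        (((hux_fun.differentiable (by simp)) x).hasDerivAt)
    have hg' : HasDerivAt (deriv (u t)) uxx x :=
      ((hdux.differentiable (by simp)) x).hasDerivAt
    exact (hasDerivAt_dot hf' hg').deriv
  -- coefficients of u_x in the eigenbasis
  set c : Fin 2 → ℝ := fun j => l j w ⬝ᵥ ux with hc
  have hbasis : ux = ∑ j, c j • r j w := basis_expand (fun i j => hnorm w i j) ux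
  -- key: c j equals the spatial derivative of R j
  have hcderiv : ∀ j, deriv (fun y => R j (u t y)) x = c j := fun j => key1 j x
  -- l i ⬝ (A w *ᵥ ux) = lam i w * c i
  have hAux : l i w ⬝ᵥ (A w *ᵥ ux) = lam i w * c i := by
    rw [hbasis]
    simp only [Fin.sum_univ_two, Matrix.mulVec_add, Matrix.mulVec_smul, heig,
      dotProduct_add, dotProduct_smul, hnorm, smul_eq_mul]
    fin_cases i <;> simp <;> ring
  -- key antisymmetry identity from differentiating l i ⬝ r k = const
  have hanti : ∀ j k : Fin 2, Bf i j k w = -(l i w ⬝ᵥ fderiv ℝ (r k) w (r j w)) := by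
    intro j k
    have hconst : (fun w' => l i w' ⬝ᵥ r k w') = fun _ => (if i = k then (1:ℝ) else 0) :=
      funext fun w' => hnorm w' i k
    have h0 : fderiv ℝ (fun w' => l i w' ⬝ᵥ r k w') w (r j w) = 0 := by
      rw [hconst]; simp
    rw [fderiv_dot (((hl i).differentiable (by simp)) w) (((hr k).differentiable (by simp)) w)] at h0
    rw [hBf]
    linarith [h0]
  -- Temple condition kills the pure off-diagonal quadratic terms
  have hBkk : ∀ k, k ≠ i → Bf i k k w = 0 := by
    intro k hk
    rw [hanti k k, hTemple w i k (fun h => hk h.symm), neg_zero]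
  -- quadratic form expansion
  have hquad : fderiv ℝ (l i) w ux ⬝ᵥ ux = ∑ j, ∑ k, c j * c k * Bf i j k w := by
    conv_lhs => rw [hbasis]
    simp only [Fin.sum_univ_two, map_add, _root_.map_smul, add_dotProduct, smul_dotProduct,
      dotProduct_add, dotProduct_smul, smul_eq_mul, hBf]
    ring
  have hquad2 : fderiv ℝ (l i) w ux ⬝ᵥ ux
      = c i * ∑ j, (if j = i then Bf i i i w else Bf i i j w + Bf i j i w) * c j := by
    rw [hquad, quad_identity c (fun j k => Bf i j k w) i hBkk]
  -- the PDE, dotted with l i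
  have hPDE' : l i w ⬝ᵥ ut = ε * (l i w ⬝ᵥ uxx) - lam i w * c i := by
    have h := hPDE t x ht
    have h2 : ut = ε • uxx - A w *ᵥ ux := by
      rw [hut, huxx, hux, eq_sub_iff_add_eq]
      exact h
    rw [h2, dotProduct_sub, dotProduct_smul, smul_eq_mul, hAux]
  -- put everything together
  rw [key2, key3, hcderiv i]
  simp only [hcderiv]
  rw [hPDE', hquad2]
  simp only [neg_mul, Finset.sum_neg_distrib, mul_neg]
  ring
end
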